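/- arXiv:1812.08698 — 6 statements merged into one kernel-verified Lean document; each statement's English description precedes it below -/
import Mathlib

section
/- The lattice A_4^∨(5) satisfies the condition Norm_2: for every x ∈ (1/5)A_4 there exists h ∈ (1/5)A_4 such that x − h ∈ A_4^∨ and 5⟨h,h⟩ ≤ 2. -/
open scoped BigOperators

noncomputable section

/-- The standard bilinear form `⟨x,y⟩ = ∑ xᵢ yᵢ` on `ℚ^5`. -/
def form (x y : Fin 5 → ℚ) : ℚ := ∑ i, x i * y i

/-- The root lattice `A₄ = {a ∈ ℤ^5 : a₁ + ⋯ + a₅ = 0}` inside `ℚ^5`. -/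
def A4 : AddSubgroup (Fin 5 → ℚ) where
  carrier := {a | (∀ i, ∃ n : ℤ, a i = (n : ℚ)) ∧ ∑ i, a i = 0}
  zero_mem' := ⟨fun _ => ⟨0, by simp⟩, by simp⟩
  add_mem' := by
    rintro a b ⟨ha, ha0⟩ ⟨hb, hb0⟩
    constructor
    · intro i
      obtain ⟨n, hn⟩ := ha i
      obtain ⟨m, hm⟩ := hb i
      exact ⟨n + m, by push_cast [Pi.add_apply, hn, hm]; ring⟩
    · simp [Pi.add_apply, Finset.sum_add_distrib, ha0, hb0]
  neg_mem' := by
    rintro a ⟨ha, ha0⟩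
    constructor
    · intro i
      obtain ⟨n, hn⟩ := ha i
      exact ⟨-n, by push_cast [Pi.neg_apply, hn]; ring⟩
    · simp [Pi.neg_apply, Finset.sum_neg_distrib, ha0]

/-- The fundamental weight `w₁ = (4,-1,-1,-1,-1)/5` of `A₄`. -/
def w1 : Fin 5 → ℚ := ![4/5, -1/5, -1/5, -1/5, -1/5]
/-- The fundamental weight `w₂ = (3,3,-2,-2,-2)/5` of `A₄`. -/
def w2 : Fin 5 → ℚ := ![3/5, 3/5, -2/5, -2/5, -2/5]
/-- The fundamental weight `w₃ = (2,2,2,-3,-3)/5` of `A₄`. -/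
def w3 : Fin 5 → ℚ := ![2/5, 2/5, 2/5, -3/5, -3/5]
/-- The fundamental weight `w₄ = (1,1,1,1,-4)/5` of `A₄`. -/
def w4 : Fin 5 → ℚ := ![1/5, 1/5, 1/5, 1/5, -4/5]

/-- The weight lattice `A₄^∨ = ℤw₁ + ℤw₂ + ℤw₃ + ℤw₄`.  The rescaled lattice `A₄^∨(5)`
is this group equipped with the bilinear form `5⟨·,·⟩`. -/
def A4dual : AddSubgroup (Fin 5 → ℚ) := AddSubgroup.closure {w1, w2, w3, w4}

/-- The dual lattice `(1/5)A₄ = {a/5 : a ∈ A₄}` of `A₄^∨(5)`. -/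
def fifthA4 : AddSubgroup (Fin 5 → ℚ) :=
  A4.map (DistribMulAction.toAddMonoidHom (Fin 5 → ℚ) ((5 : ℚ)⁻¹))

/-- The hyperplane `V = {x ∈ ℚ^5 : x₁ + ⋯ + x₅ = 0}`. -/
def V0 : Submodule ℚ (Fin 5 → ℚ) where
  carrier := {x | ∑ i, x i = 0}
  zero_mem' := by simp
  add_mem' := by
    intro a b ha hb
    simp only [Set.mem_setOf_eq] at *
    simp [Pi.add_apply, Finset.sum_add_distrib, ha, hb]
  smul_mem' := by
    intro c a ha
    simp only [Set.mem_setOf_eq] at *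
    simp [Pi.smul_apply, ← Finset.mul_sum, ha]

/-- The discriminant group `D = ((1/5)A₄)/A₄^∨` of the lattice `A₄^∨(5)`. -/
abbrev Disc := fifthA4 ⧸ (A4dual.addSubgroupOf fifthA4)

/-- auxiliary: shifted residue -/
def uRes (a c : ℕ) : ℕ := (a + 10 - c) % 5

lemma key : ∀ t0 t1 t2 t3 t4 : Fin 5,
    (t0.val + t1.val + t2.val + t3.val + t4.val) % 5 = 0 →
    ∃ c : Fin 5,
      uRes t0 c + uRes t1 c + uRes t2 c + uRes t3 c + uRes t4 c = 10 ∧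
      (uRes t0 c)^2 + (uRes t1 c)^2 + (uRes t2 c)^2 + (uRes t3 c)^2 + (uRes t4 c)^2 ≤ 30 := by
  decide

lemma combo_mem (k1 k2 k3 k4 : ℤ) :
    k1 • w1 + k2 • w2 + k3 • w3 + k4 • w4 ∈ A4dual := by
  have h1 : w1 ∈ A4dual := AddSubgroup.subset_closure (by simp)
  have h2 : w2 ∈ A4dual := AddSubgroup.subset_closure (by simp)
  have h3 : w3 ∈ A4dual := AddSubgroup.subset_closure (by simp)
  have h4 : w4 ∈ A4dual := AddSubgroup.subset_closure (by simp)
  exact add_mem (add_mem (add_mem (AddSubgroup.zsmul_mem _ h1 _)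
    (AddSubgroup.zsmul_mem _ h2 _)) (AddSubgroup.zsmul_mem _ h3 _))
    (AddSubgroup.zsmul_mem _ h4 _)

/-- The lattice `A₄^∨(5)` satisfies the condition `Norm₂`: every class of
the dual lattice `(1/5)A₄` modulo `A₄^∨` contains a vector of norm (w.r.t. `5⟨·,·⟩`)
at most `2`. -/
theorem A4dual5_satisfies_Norm2 :
    ∀ x ∈ fifthA4, ∃ h ∈ fifthA4, x - h ∈ A4dual ∧ 5 * form h h ≤ 2 := by
  rintro x hx
  obtain ⟨a, ⟨hint, hsum⟩, rfl⟩ := hx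
  choose n hn using hint
  have hnsum : n 0 + n 1 + n 2 + n 3 + n 4 = 0 := by
    rw [Fin.sum_univ_five, hn 0, hn 1, hn 2, hn 3, hn 4] at hsum
    exact_mod_cast hsum
  have hTlt : ∀ i, (n i % 5).toNat < 5 := by intro i; omega
  have hmod : ((n 0 % 5).toNat + (n 1 % 5).toNat + (n 2 % 5).toNat + (n 3 % 5).toNat
      + (n 4 % 5).toNat) % 5 = 0 := by omega
  obtain ⟨c, hcsum, hcnorm⟩ :=
    key ⟨_, hTlt 0⟩ ⟨_, hTlt 1⟩ ⟨_, hTlt 2⟩ ⟨_, hTlt 3⟩ ⟨_, hTlt 4⟩ hmod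
  set U : Fin 5 → ℕ := fun i => uRes (n i % 5).toNat c.val with hUdef
  have hcsum' : U 0 + U 1 + U 2 + U 3 + U 4 = 10 := hcsum
  have hcnorm' : (U 0)^2 + (U 1)^2 + (U 2)^2 + (U 3)^2 + (U 4)^2 ≤ 30 := hcnorm
  have hU : ∀ i, U i = ((n i % 5).toNat + 10 - c.val) % 5 := fun i => rfl
  have hclt : c.val < 5 := c.isLt
  -- the integer vector b and the common fractional shift e
  have hmex : ∀ i, ∃ m : ℤ, n i - ((U i : ℤ) - 2) = 5 * m + ((c.val : ℤ) + 2) := by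
    intro i
    have h1 := hU i
    exact ⟨(n i - ((U i : ℤ) - 2) - ((c.val : ℤ) + 2)) / 5, by omega⟩
  choose m hm using hmex
  have hUsum : (U 0 : ℤ) + U 1 + U 2 + U 3 + U 4 = 10 := by exact_mod_cast hcsum'
  have hmsum : m 0 + m 1 + m 2 + m 3 + m 4 = -((c.val : ℤ) + 2) := by
    have h0 := hm 0; have h1 := hm 1; have h2 := hm 2; have h3 := hm 3; have h4 := hm 4
    omega
  refine ⟨(5 : ℚ)⁻¹ • (fun i => ((U i : ℚ) - 2)), ?_, ?_, ?_⟩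
  · refine ⟨fun i => ((U i : ℚ) - 2), ⟨fun i => ⟨(U i : ℤ) - 2, by push_cast; ring⟩, ?_⟩, rfl⟩
    rw [Fin.sum_univ_five]
    have : (U 0 : ℚ) + U 1 + U 2 + U 3 + U 4 = 10 := by exact_mod_cast hcsum'
    linarith
  · have hw : (DistribMulAction.toAddMonoidHom (Fin 5 → ℚ) ((5 : ℚ)⁻¹)) a
        - (5 : ℚ)⁻¹ • (fun i => ((U i : ℚ) - 2))
        = (m 0 - m 1) • w1 + (m 1 - m 2) • w2 + (m 2 - m 3) • w3 + (m 3 - m 4) • w4 := by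
      have hQ : ∀ j, (n j : ℚ) - ((U j : ℚ) - 2) = 5 * (m j : ℚ) + ((c.val : ℚ) + 2) := by
        intro j; exact_mod_cast hm j
      have hQsum : (m 0 : ℚ) + m 1 + m 2 + m 3 + m 4 = -((c.val : ℚ) + 2) := by
        exact_mod_cast hmsum
      have h0 := hQ 0; have h1 := hQ 1; have h2 := hQ 2; have h3 := hQ 3; have h4 := hQ 4
      funext i
      fin_cases i <;>
        · simp [w1, w2, w3, w4, hn 0, hn 1, hn 2, hn 3, hn 4, Pi.mul_apply]
          push_cast
          linarith
    rw [hw]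
    exact combo_mem _ _ _ _
  · have hsQ : (U 0 : ℚ) + U 1 + U 2 + U 3 + U 4 = 10 := by exact_mod_cast hcsum'
    have hnQ : (U 0 : ℚ)^2 + (U 1)^2 + (U 2)^2 + (U 3)^2 + (U 4)^2 ≤ 30 := by
      exact_mod_cast hcnorm'
    simp only [form, Fin.sum_univ_five, Pi.smul_apply, smul_eq_mul]
    have hexp : (5:ℚ) *
        (5⁻¹ * ((U 0:ℚ) - 2) * (5⁻¹ * ((U 0:ℚ) - 2)) + 5⁻¹ * ((U 1:ℚ) - 2) * (5⁻¹ * ((U 1:ℚ) - 2)) +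
            5⁻¹ * ((U 2:ℚ) - 2) * (5⁻¹ * ((U 2:ℚ) - 2)) +
          5⁻¹ * ((U 3:ℚ) - 2) * (5⁻¹ * ((U 3:ℚ) - 2)) +
        5⁻¹ * ((U 4:ℚ) - 2) * (5⁻¹ * ((U 4:ℚ) - 2)))
      = (((U 0:ℚ)^2 + (U 1:ℚ)^2 + (U 2:ℚ)^2 + (U 3:ℚ)^2 + (U 4:ℚ)^2)
          - 4 * ((U 0:ℚ) + (U 1:ℚ) + (U 2:ℚ) + (U 3:ℚ) + (U 4:ℚ)) + 20) / 5 := by ring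
    rw [hexp]
    linarith [hsQ, hnQ]
end
end

section
/- Any two distinct vectors of norm 2/5 in the dual lattice of A_4^∨(5) are inequivalent modulo A_4^∨: if a, b ∈ A_4 satisfy ⟨a,a⟩ = ⟨b,b⟩ = 2 and (a − b)/5 ∈ A_4^∨, then a = b. Consequently the vectors a/5 with a ∈ A_4, ⟨a,a⟩ = 2 represent exactly 20 distinct classes in D. -/
open scoped BigOperators

noncomputable section

lemma intWitness {a : Fin 5 → ℚ} (ha : a ∈ A4) :
    ∃ n : Fin 5 → ℤ, (∀ i, a i = (n i : ℚ)) ∧ ∑ i, n i = 0 := by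
  obtain ⟨h1, h2⟩ := ha
  choose n hn using h1
  refine ⟨n, hn, ?_⟩
  have : ((∑ i, n i : ℤ) : ℚ) = 0 := by
    push_cast
    rw [← h2]
    exact Finset.sum_congr rfl fun i _ => (hn i).symm
  exact_mod_cast this

lemma sqSum {a : Fin 5 → ℚ} {n : Fin 5 → ℤ} (hn : ∀ i, a i = (n i : ℚ))
    (h2 : form a a = 2) : ∑ i, n i ^ 2 = 2 := by
  have : ((∑ i, n i ^ 2 : ℤ) : ℚ) = 2 := by
    push_cast
    rw [← h2]
    unfold form
    exact Finset.sum_congr rfl fun i _ => by rw [hn i]; ring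
  exact_mod_cast this

lemma coordBound {n : Fin 5 → ℤ} (hsq : ∑ i, n i ^ 2 = 2) (i : Fin 5) :
    -1 ≤ n i ∧ n i ≤ 1 := by
  have h := Finset.single_le_sum (f := fun i => n i ^ 2)
    (fun i _ => sq_nonneg _) (Finset.mem_univ i)
  rw [hsq] at h
  constructor <;> nlinarith [sq_nonneg (n i + 1), sq_nonneg (n i - 1), h]

def Hgrp : AddSubgroup (Fin 5 → ℚ) where
  carrier := {x | ∀ i j : Fin 5, ∃ m : ℤ, x i - x j = (m : ℚ)}
  zero_mem' := fun i j => ⟨0, by simp⟩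
  add_mem' := by
    rintro a b ha hb i j
    obtain ⟨m, hm⟩ := ha i j
    obtain ⟨k, hk⟩ := hb i j
    exact ⟨m + k, by push_cast; simp only [Pi.add_apply]; linarith⟩
  neg_mem' := by
    rintro a ha i j
    obtain ⟨m, hm⟩ := ha i j
    exact ⟨-m, by push_cast; simp only [Pi.neg_apply]; linarith⟩

lemma dual_diff {x : Fin 5 → ℚ} (hx : x ∈ A4dual) (i j : Fin 5) :
    ∃ m : ℤ, x i - x j = (m : ℚ) := by
  have hle : A4dual ≤ Hgrp := by
    apply (AddSubgroup.closure_le _).2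
    intro w hw
    simp only [Set.mem_insert_iff, Set.mem_singleton_iff] at hw
    have key : ∀ q : ℚ, (q = 0 ∨ q = 1 ∨ q = -1) → ∃ m : ℤ, q = (m : ℚ) := by
      rintro q (rfl | rfl | rfl)
      exacts [⟨0, by norm_num⟩, ⟨1, by norm_num⟩, ⟨-1, by norm_num⟩]
    rcases hw with rfl | rfl | rfl | rfl <;>
      intro i j <;> fin_cases i <;> fin_cases j <;>
      exact key _ (by norm_num [w1, w2, w3, w4])
  exact hle hx i j

lemma part1 : ∀ a b : Fin 5 → ℚ, a ∈ A4 → b ∈ A4 → form a a = 2 → form b b = 2 →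
    (5 : ℚ)⁻¹ • (a - b) ∈ A4dual → a = b := by
  intro a b ha hb ha2 hb2 hab
  obtain ⟨n, hn, hns⟩ := intWitness ha
  obtain ⟨m, hm, hms⟩ := intWitness hb
  have hnb := coordBound (sqSum hn ha2)
  have hmb := coordBound (sqSum hm hb2)
  have key : ∀ i j : Fin 5, ∃ t : ℤ, (n i - m i) - (n j - m j) = 5 * t := by
    intro i j
    obtain ⟨t, ht⟩ := dual_diff hab i j
    refine ⟨t, ?_⟩
    have h5 : ((n i - m i - (n j - m j) : ℤ) : ℚ) = ((5 * t : ℤ) : ℚ) := by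
      push_cast
      simp only [Pi.smul_apply, Pi.sub_apply, smul_eq_mul] at ht
      rw [← hn, ← hn, ← hm, ← hm]
      linarith
    exact_mod_cast h5
  have heq : ∀ i : Fin 5, n i - m i = n 0 - m 0 := by
    intro i
    obtain ⟨t, ht⟩ := key i 0
    have b1 := hnb i; have b2 := hnb 0; have b3 := hmb i; have b4 := hmb 0
    omega
  have hd : ∀ i, n i = m i := by
    intro i
    have e1 := heq 1; have e2 := heq 2; have e3 := heq 3; have e4 := heq 4
    have e5 := heq i
    rw [Fin.sum_univ_five] at hns hms
    omega
  funext i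
  rw [hn i, hm i, hd i]

def rt (p : Fin 5 × Fin 5) : Fin 5 → ℚ :=
  fun k => (if k = p.1 then 1 else 0) - (if k = p.2 then 1 else 0)

lemma root_char {a : Fin 5 → ℚ} (ha : a ∈ A4) (h2 : form a a = 2) :
    ∃ p : Fin 5 × Fin 5, p.1 ≠ p.2 ∧ a = rt p := by
  obtain ⟨n, hn, hns⟩ := intWitness ha
  have hsq := sqSum hn h2
  obtain ⟨i, hi⟩ : ∃ i, n i = 1 := by
    by_contra h
    push_neg at h
    have hz : ∀ k ∈ Finset.univ, n k = 0 := by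
      rw [← Finset.sum_eq_zero_iff_of_nonpos
        (fun k _ => by have := coordBound hsq k; have := h k; omega)]
      exact hns
    simp only [Finset.mem_univ, forall_true_left] at hz
    simp [hz] at hsq
  obtain ⟨j, hj⟩ : ∃ j, n j = -1 := by
    by_contra h
    push_neg at h
    have hz : ∀ k ∈ Finset.univ, n k = 0 := by
      rw [← Finset.sum_eq_zero_iff_of_nonneg
        (fun k _ => by have := coordBound hsq k; have := h k; omega)]
      exact hns
    simp only [Finset.mem_univ, forall_true_left] at hz
    simp [hz] at hsq
  have hij : i ≠ j := fun e => by rw [e, hj] at hi; omega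
  have hzero : ∀ k, k ≠ i → k ≠ j → n k = 0 := by
    have h1 : n i ^ 2 + ∑ k ∈ Finset.univ.erase i, n k ^ 2 = 2 := by
      rw [Finset.add_sum_erase _ (fun k => n k ^ 2) (Finset.mem_univ i)]
      exact hsq
    have hj' : j ∈ Finset.univ.erase i := by simp [hij.symm]
    have h2' : n j ^ 2 + ∑ k ∈ (Finset.univ.erase i).erase j, n k ^ 2
        = ∑ k ∈ Finset.univ.erase i, n k ^ 2 :=
      Finset.add_sum_erase _ (fun k => n k ^ 2) hj'
    have hrest : ∑ k ∈ (Finset.univ.erase i).erase j, n k ^ 2 = 0 := by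
      rw [hi] at h1; rw [hj] at h2'; omega
    intro k hki hkj
    have hk : k ∈ (Finset.univ.erase i).erase j := by simp [hki, hkj]
    have := (Finset.sum_eq_zero_iff_of_nonneg
      (fun x _ => sq_nonneg (n x))).1 hrest k hk
    exact pow_eq_zero_iff (by norm_num) |>.1 this
  refine ⟨(i, j), hij, ?_⟩
  funext k
  rw [hn k]
  simp only [rt]
  by_cases hki : k = i
  · subst hki; rw [if_pos rfl, if_neg hij, hi]; norm_num
  · by_cases hkj : k = j
    · subst hkj; rw [if_neg hki, if_pos rfl, hj]; norm_num
    · rw [if_neg hki, if_neg hkj, hzero k hki hkj]; norm_num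

lemma rt_mem {p : Fin 5 × Fin 5} (hp : p.1 ≠ p.2) :
    rt p ∈ A4 ∧ form (rt p) (rt p) = 2 := by
  obtain ⟨i, j⟩ := p
  simp only [ne_eq] at hp
  refine ⟨⟨fun k => ⟨(if k = i then 1 else 0) - (if k = j then 1 else 0), by
      simp only [rt]; split_ifs <;> norm_num⟩, ?_⟩, ?_⟩
  · simp [rt, Finset.sum_sub_distrib, Finset.sum_ite_eq']
  · have key : ∀ k : Fin 5, rt (i, j) k * rt (i, j) k
        = (if k = i then (1:ℚ) else 0) + (if k = j then 1 else 0) := by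
      intro k
      by_cases h1 : k = i <;> by_cases h2 : k = j
      · exact absurd (h1 ▸ h2) hp
      all_goals simp [rt, h1, h2, hp, Ne.symm hp]
    unfold form
    rw [Finset.sum_congr rfl fun k _ => key k]
    simp [Finset.sum_add_distrib, Finset.sum_ite_eq']
    norm_num

lemma rt_inj : Set.InjOn rt {p : Fin 5 × Fin 5 | p.1 ≠ p.2} := by
  intro p hp q hq h
  simp only [Set.mem_setOf_eq] at hp hq
  have h1 : rt q p.1 = 1 := by rw [← h]; simp [rt, hp]
  have h2 : rt q p.2 = -1 := by rw [← h]; simp [rt, Ne.symm hp]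
  simp only [rt] at h1 h2
  split_ifs at h1 h2 <;>
    first | exact Prod.ext ‹_› ‹_› | (norm_num at h1; done) | norm_num at h2

lemma set_eq : {a : Fin 5 → ℚ | a ∈ A4 ∧ form a a = 2}
    = rt '' {p : Fin 5 × Fin 5 | p.1 ≠ p.2} := by
  ext a
  constructor
  · rintro ⟨ha, h2⟩
    obtain ⟨p, hp, rfl⟩ := root_char ha h2
    exact ⟨p, hp, rfl⟩
  · rintro ⟨p, hp, rfl⟩
    exact rt_mem hp

lemma count_part : Set.ncard ((fun a : Fin 5 → ℚ =>
      (QuotientAddGroup.mk ((5 : ℚ)⁻¹ • a) : (Fin 5 → ℚ) ⧸ A4dual)) ''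
    {a | a ∈ A4 ∧ form a a = 2}) = 20 := by
  have gInj : Set.InjOn (fun a : Fin 5 → ℚ =>
      (QuotientAddGroup.mk ((5 : ℚ)⁻¹ • a) : (Fin 5 → ℚ) ⧸ A4dual))
      {a | a ∈ A4 ∧ form a a = 2} := by
    rintro a ⟨ha, ha2⟩ b ⟨hb, hb2⟩ h
    have hmem : (5 : ℚ)⁻¹ • (b - a) ∈ A4dual := by
      rw [smul_sub, sub_eq_neg_add]
      exact (QuotientAddGroup.eq).1 h
    exact (part1 b a hb ha hb2 ha2 hmem).symm
  rw [Set.ncard_image_of_injOn gInj, set_eq,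
    Set.ncard_image_of_injOn rt_inj]
  have hP : {p : Fin 5 × Fin 5 | p.1 ≠ p.2}
      = ↑((Finset.univ : Finset (Fin 5 × Fin 5)).filter fun p => p.1 ≠ p.2) := by
    ext p; simp
  rw [hP, Set.ncard_coe_finset]
  decide

/-- Distinct vectors of norm `2/5` in the dual lattice of `A₄^∨(5)`
are inequivalent modulo `A₄^∨`, and the vectors `a/5` with `a ∈ A₄`, `⟨a,a⟩ = 2`
represent exactly `20` distinct classes in the discriminant group. -/
theorem norm_two_fifths_classes :
    (∀ a b : Fin 5 → ℚ, a ∈ A4 → b ∈ A4 → form a a = 2 → form b b = 2 →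
      (5 : ℚ)⁻¹ • (a - b) ∈ A4dual → a = b) ∧
    Set.ncard ((fun a : Fin 5 → ℚ =>
        (QuotientAddGroup.mk ((5 : ℚ)⁻¹ • a) : (Fin 5 → ℚ) ⧸ A4dual)) ''
      {a | a ∈ A4 ∧ form a a = 2}) = 20 :=
  ⟨part1, count_part⟩
end
end

section
/- The vectors of norm 6/5 in the dual lattice of A_4^∨(5) fall into exactly 30 classes modulo A_4^∨, each class containing exactly 2 such vectors: for every a ∈ A_4 with ⟨a,a⟩ = 6, the set {b ∈ A_4 : ⟨b,b⟩ = 6 and (a − b)/5 ∈ A_4^∨} has exactly 2 elements, and the image of {a ∈ A_4 : ⟨a,a⟩ = 6} in D under a ↦ a/5 + A_4^∨ has exactly 30 elements. -/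
open scoped BigOperators

noncomputable section

/-- list of the 60 norm-6 vectors -/
def Fz : List (Fin 5 → ℤ) := [
  ![-2, 0, 0, 1, 1],
  ![-2, 0, 1, 0, 1],
  ![-2, 0, 1, 1, 0],
  ![-2, 1, 0, 0, 1],
  ![-2, 1, 0, 1, 0],
  ![-2, 1, 1, 0, 0],
  ![-1, -1, 0, 0, 2],
  ![-1, -1, 0, 2, 0],
  ![-1, -1, 2, 0, 0],
  ![-1, 0, -1, 0, 2],
  ![-1, 0, -1, 2, 0],
  ![-1, 0, 0, -1, 2],
  ![-1, 0, 0, 2, -1],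
  ![-1, 0, 2, -1, 0],
  ![-1, 0, 2, 0, -1],
  ![-1, 2, -1, 0, 0],
  ![-1, 2, 0, -1, 0],
  ![-1, 2, 0, 0, -1],
  ![0, -2, 0, 1, 1],
  ![0, -2, 1, 0, 1],
  ![0, -2, 1, 1, 0],
  ![0, -1, -1, 0, 2],
  ![0, -1, -1, 2, 0],
  ![0, -1, 0, -1, 2],
  ![0, -1, 0, 2, -1],
  ![0, -1, 2, -1, 0],
  ![0, -1, 2, 0, -1],
  ![0, 0, -2, 1, 1],
  ![0, 0, -1, -1, 2],
  ![0, 0, -1, 2, -1],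
  ![0, 0, 1, -2, 1],
  ![0, 0, 1, 1, -2],
  ![0, 0, 2, -1, -1],
  ![0, 1, -2, 0, 1],
  ![0, 1, -2, 1, 0],
  ![0, 1, 0, -2, 1],
  ![0, 1, 0, 1, -2],
  ![0, 1, 1, -2, 0],
  ![0, 1, 1, 0, -2],
  ![0, 2, -1, -1, 0],
  ![0, 2, -1, 0, -1],
  ![0, 2, 0, -1, -1],
  ![1, -2, 0, 0, 1],
  ![1, -2, 0, 1, 0],
  ![1, -2, 1, 0, 0],
  ![1, 0, -2, 0, 1],
  ![1, 0, -2, 1, 0],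
  ![1, 0, 0, -2, 1],
  ![1, 0, 0, 1, -2],
  ![1, 0, 1, -2, 0],
  ![1, 0, 1, 0, -2],
  ![1, 1, -2, 0, 0],
  ![1, 1, 0, -2, 0],
  ![1, 1, 0, 0, -2],
  ![2, -1, -1, 0, 0],
  ![2, -1, 0, -1, 0],
  ![2, -1, 0, 0, -1],
  ![2, 0, -1, -1, 0],
  ![2, 0, -1, 0, -1],
  ![2, 0, 0, -1, -1]]

def F : Finset (Fin 5 → ℤ) := Fz.toFinset

def rel5 (m n : Fin 5 → ℤ) : Prop := ∀ i, (5:ℤ) ∣ (m i - n i) - (m 0 - n 0)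

instance (m n : Fin 5 → ℤ) : Decidable (rel5 m n) :=
  inferInstanceAs (Decidable (∀ i, (5:ℤ) ∣ (m i - n i) - (m 0 - n 0)))

def F30 : Finset (Fin 5 → ℤ) := F.filter (fun n => ∃ i, n i = 2)


set_option linter.unusedTactic false in
set_option maxRecDepth 100000 in
lemma complete : (Finset.Icc (-2 : Fin 5 → ℤ) 2).filter
    (fun n => (∑ i, n i = 0) ∧ ∑ i, n i * n i = 6) ⊆ F := by decide

lemma sound : ∀ n ∈ F, (∑ i, n i = 0) ∧ ∑ i, n i * n i = 6 := by decide

lemma card2 : ∀ m ∈ F, (F.filter (fun n => rel5 m n)).card = 2 := by decide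

lemma reps : ∀ n ∈ F, ∃ m ∈ F30, rel5 m n := by decide

lemma repinj : ∀ m ∈ F30, ∀ m' ∈ F30, rel5 m m' → m = m' := by decide

lemma card30 : F30.card = 30 := by decide

lemma F30subF : F30 ⊆ F := Finset.filter_subset _ _

lemma rel5_symm {m n : Fin 5 → ℤ} (h : rel5 m n) : rel5 n m := by
  intro i; have := h i; omega

/-- the cast map ℤ^5 → ℚ^5 -/
def cz (n : Fin 5 → ℤ) : Fin 5 → ℚ := fun i => (n i : ℚ)

lemma cz_inj : Function.Injective cz := by
  intro a b h
  funext i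
  have := congrFun h i
  simp only [cz] at this
  exact_mod_cast this

lemma mem_A4dual_iff (x : Fin 5 → ℚ) :
    x ∈ A4dual ↔ (∑ i, x i = 0) ∧ ∀ i, ∃ k : ℤ, x i - x 0 = k := by
  constructor
  · intro hx
    induction hx using AddSubgroup.closure_induction with
    | mem y hy =>
      simp only [Set.mem_insert_iff, Set.mem_singleton_iff] at hy
      rcases hy with h | h | h | h <;> subst h <;>
        refine ⟨by norm_num [w1, w2, w3, w4, Fin.sum_univ_five, Matrix.cons_val_two, Matrix.cons_val_three, Matrix.cons_val_four], fun i => ?_⟩ <;>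
        fin_cases i <;>
        first
          | (refine ⟨0, ?_⟩; norm_num [w1, w2, w3, w4]; done)
          | (refine ⟨-1, ?_⟩; norm_num [w1, w2, w3, w4])
    | zero => exact ⟨by simp, fun i => ⟨0, by simp⟩⟩
    | add x y hx hy ihx ihy =>
      refine ⟨by simp [Pi.add_apply, Finset.sum_add_distrib, ihx.1, ihy.1], fun i => ?_⟩
      obtain ⟨k, hk⟩ := ihx.2 i
      obtain ⟨l, hl⟩ := ihy.2 i
      exact ⟨k + l, by push_cast [Pi.add_apply]; linarith⟩
    | neg x hx ihx =>
      refine ⟨by simp [Pi.neg_apply, Finset.sum_neg_distrib, ihx.1], fun i => ?_⟩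
      obtain ⟨k, hk⟩ := ihx.2 i
      exact ⟨-k, by push_cast [Pi.neg_apply]; linarith⟩
  · rintro ⟨h0, hk⟩
    obtain ⟨k1, e1⟩ := hk 1
    obtain ⟨k2, e2⟩ := hk 2
    obtain ⟨k3, e3⟩ := hk 3
    obtain ⟨k4, e4⟩ := hk 4
    rw [Fin.sum_univ_five] at h0
    have h5 : (5 : ℚ) * x 0 + ((k1 : ℚ) + k2 + k3 + k4) = 0 := by linarith
    have hxeq : x = (-k1) • w1 + (k1 - k2) • w2 + (k2 - k3) • w3 + (k3 - k4) • w4 := by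
      funext i
      fin_cases i <;>
        · simp only [Pi.add_apply, Pi.smul_apply]
          norm_num [w1, w2, w3, w4]
          push_cast
          linarith
    rw [hxeq]
    have m1 : w1 ∈ A4dual := AddSubgroup.subset_closure (by simp)
    have m2 : w2 ∈ A4dual := AddSubgroup.subset_closure (by simp)
    have m3 : w3 ∈ A4dual := AddSubgroup.subset_closure (by simp)
    have m4 : w4 ∈ A4dual := AddSubgroup.subset_closure (by simp)
    exact add_mem (add_mem (add_mem (zsmul_mem m1 _) (zsmul_mem m2 _))
      (zsmul_mem m3 _)) (zsmul_mem m4 _)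


lemma bridge (m n : Fin 5 → ℤ) (hm : ∑ i, m i = 0) (hn : ∑ i, n i = 0) :
    ((5 : ℚ)⁻¹ • (cz m - cz n) ∈ A4dual) ↔ rel5 m n := by
  rw [mem_A4dual_iff]
  have hy : ∀ i, ((5 : ℚ)⁻¹ • (cz m - cz n)) i = ((m i : ℚ) - n i) / 5 := by
    intro i
    simp only [Pi.smul_apply, Pi.sub_apply, cz, smul_eq_mul]
    ring
  constructor
  · rintro ⟨-, h⟩ i
    obtain ⟨k, hk⟩ := h i
    rw [hy i, hy 0] at hk
    have h1 : ((m i : ℚ) - n i) - ((m 0 : ℚ) - n 0) = 5 * k := by linarith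
    have hz : (m i - n i) - (m 0 - n 0) = 5 * k := by exact_mod_cast h1
    exact ⟨k, hz⟩
  · intro h
    constructor
    · rw [Fin.sum_univ_five] at hm hn ⊢
      rw [hy 0, hy 1, hy 2, hy 3, hy 4]
      have hm' : (m 0 : ℚ) + m 1 + m 2 + m 3 + m 4 = 0 := by exact_mod_cast hm
      have hn' : (n 0 : ℚ) + n 1 + n 2 + n 3 + n 4 = 0 := by exact_mod_cast hn
      linarith
    · intro i
      obtain ⟨k, hk⟩ := h i
      refine ⟨k, ?_⟩
      rw [hy i, hy 0]
      have h1 : ((m i : ℚ) - n i) - ((m 0 : ℚ) - n 0) = 5 * k := by exact_mod_cast hk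
      linarith

lemma memA4_iff (a : Fin 5 → ℚ) :
    (a ∈ A4 ∧ form a a = 6) ↔ ∃ n ∈ F, cz n = a := by
  constructor
  · rintro ⟨⟨hint, hsum⟩, h6⟩
    choose nn hnn using hint
    have hca : cz nn = a := by funext i; exact (hnn i).symm
    have hs : ∑ i, nn i = 0 := by
      have h1 : ∑ i, ((nn i : ℚ)) = 0 := by
        rw [← hsum]; exact Finset.sum_congr rfl fun i _ => (hnn i).symm
      exact_mod_cast h1
    have hq : ∑ i, nn i * nn i = 6 := by
      have h1 : ∑ i, ((nn i : ℚ)) * ((nn i : ℚ)) = 6 := by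
        rw [← h6]; unfold form; exact Finset.sum_congr rfl fun i _ => by rw [hnn i]
      exact_mod_cast h1
    have hb : ∀ i, nn i ∈ Finset.Icc (-2 : ℤ) 2 := by
      intro i
      have h1 : nn i * nn i ≤ 6 := by
        have h2 : ∀ j ∈ Finset.univ, 0 ≤ nn j * nn j := fun j _ => mul_self_nonneg _
        calc nn i * nn i ≤ ∑ j, nn j * nn j :=
              Finset.single_le_sum h2 (Finset.mem_univ i)
          _ = 6 := hq
      rw [Finset.mem_Icc]
      constructor <;> nlinarith
    have hIcc : nn ∈ Finset.Icc (-2 : Fin 5 → ℤ) 2 := by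
      rw [Finset.mem_Icc]
      constructor <;> intro i <;> have := hb i <;> rw [Finset.mem_Icc] at this
      · exact this.1
      · exact this.2
    exact ⟨nn, complete (Finset.mem_filter.mpr ⟨hIcc, hs, hq⟩), hca⟩
  · rintro ⟨n, hnF, rfl⟩
    obtain ⟨hs, hq⟩ := sound n hnF
    refine ⟨⟨fun i => ⟨n i, rfl⟩, ?_⟩, ?_⟩
    · have h1 : ∑ i, ((n i : ℚ)) = 0 := by exact_mod_cast hs
      simpa [cz] using h1
    · have h1 : ∑ i, ((n i : ℚ)) * ((n i : ℚ)) = 6 := by exact_mod_cast hq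
      unfold form
      simpa [cz] using h1

/-- The vectors of norm `6/5` in the dual lattice of `A₄^∨(5)` fall
into exactly `30` classes modulo `A₄^∨`, each class containing exactly `2` such
vectors. -/
theorem norm_six_fifths_classes :
    (∀ a : Fin 5 → ℚ, a ∈ A4 → form a a = 6 →
      Set.ncard {b : Fin 5 → ℚ | b ∈ A4 ∧ form b b = 6 ∧ (5 : ℚ)⁻¹ • (a - b) ∈ A4dual} = 2) ∧
    Set.ncard ((fun a : Fin 5 → ℚ =>
        (QuotientAddGroup.mk ((5 : ℚ)⁻¹ • a) : (Fin 5 → ℚ) ⧸ A4dual)) ''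
      {a | a ∈ A4 ∧ form a a = 6}) = 30 := by
  constructor
  · intro a ha h6
    obtain ⟨m, hmF, rfl⟩ := (memA4_iff a).mp ⟨ha, h6⟩
    have hm0 : ∑ i, m i = 0 := (sound m hmF).1
    have hseteq : {b : Fin 5 → ℚ | b ∈ A4 ∧ form b b = 6 ∧ (5 : ℚ)⁻¹ • (cz m - b) ∈ A4dual}
        = cz '' ↑(F.filter (fun n => rel5 m n)) := by
      ext b
      simp only [Set.mem_setOf_eq, Set.mem_image, Finset.mem_coe, Finset.mem_filter]
      constructor
      · rintro ⟨hb, h6b, hd⟩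
        obtain ⟨n, hnF, rfl⟩ := (memA4_iff b).mp ⟨hb, h6b⟩
        exact ⟨n, ⟨hnF, (bridge m n hm0 (sound n hnF).1).mp hd⟩, rfl⟩
      · rintro ⟨n, ⟨hnF, hr⟩, rfl⟩
        have h := (memA4_iff (cz n)).mpr ⟨n, hnF, rfl⟩
        exact ⟨h.1, h.2, (bridge m n hm0 (sound n hnF).1).mpr hr⟩
    rw [hseteq, Set.ncard_image_of_injective _ cz_inj, Set.ncard_coe_finset]
    exact card2 m hmF
  · have hset : {a : Fin 5 → ℚ | a ∈ A4 ∧ form a a = 6} = cz '' ↑F := by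
      ext a
      simp only [Set.mem_setOf_eq, Set.mem_image, Finset.mem_coe]
      constructor
      · intro h
        obtain ⟨n, hnF, rfl⟩ := (memA4_iff a).mp h
        exact ⟨n, hnF, rfl⟩
      · rintro ⟨n, hnF, rfl⟩
        exact (memA4_iff (cz n)).mpr ⟨n, hnF, rfl⟩
    set g : (Fin 5 → ℚ) → (Fin 5 → ℚ) ⧸ A4dual :=
      fun a => (QuotientAddGroup.mk ((5 : ℚ)⁻¹ • a) : (Fin 5 → ℚ) ⧸ A4dual) with hg
    have key : ∀ p q : Fin 5 → ℤ, ∑ i, p i = 0 → ∑ i, q i = 0 →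
        (g (cz p) = g (cz q) ↔ rel5 q p) := by
      intro p q hp hq
      rw [hg]
      simp only
      rw [QuotientAddGroup.eq]
      have h2 : -((5 : ℚ)⁻¹ • cz p) + (5 : ℚ)⁻¹ • cz q = (5 : ℚ)⁻¹ • (cz q - cz p) := by
        rw [smul_sub]; abel
      rw [h2, bridge q p hq hp]
    have himg : g '' (cz '' ↑F) = g '' (cz '' ↑F30) := by
      apply Set.Subset.antisymm
      · rintro x ⟨b, ⟨n, hnF, rfl⟩, rfl⟩
        rw [Finset.mem_coe] at hnF
        obtain ⟨mr, hm30, hrel⟩ := reps n hnF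
        refine ⟨cz mr, ⟨mr, Finset.mem_coe.mpr hm30, rfl⟩, ?_⟩
        exact (key mr n (sound mr (F30subF hm30)).1 (sound n hnF).1).mpr
          (rel5_symm hrel)
      · exact Set.image_mono (Set.image_mono (Finset.coe_subset.mpr F30subF))
    rw [hset, himg]
    have hinj : Set.InjOn g (cz '' ↑F30) := by
      rintro x ⟨p, hp, rfl⟩ y ⟨q, hq, rfl⟩ hgeq
      rw [Finset.mem_coe] at hp hq
      have hr : rel5 q p :=
        (key p q (sound p (F30subF hp)).1 (sound q (F30subF hq)).1).mp hgeq
      rw [repinj q hq p hp hr]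
    rw [Set.ncard_image_of_injOn hinj, Set.ncard_image_of_injective _ cz_inj,
      Set.ncard_coe_finset]
    exact card30
end
end

section
/- The classes of vectors of norms 2/5, 4/5, 6/5, 8/5 and 2, together with the zero element, form a complete representative system of the discriminant group D of A_4^∨(5): for every x ∈ (1/5)A_4 with x ∉ A_4^∨, there exists a ∈ A_4 with ⟨a,a⟩ ∈ {2, 4, 6, 8, 10} such that x − a/5 ∈ A_4^∨. -/
open scoped BigOperators

noncomputable section

set_option maxHeartbeats 2000000 in
def tbl : List (Fin 5 → ℤ) :=
  [![0, 0, 0, 0, 0],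
   ![0, 0, 0, 0, 0],
   ![0, 0, 0, 0, 0],
   ![0, 0, 0, 0, 0],
   ![0, 0, 0, 0, 0],
   ![0, 0, 0, 0, 0],
   ![0, 0, 0, 0, 0],
   ![0, 0, 0, 0, 0],
   ![0, 0, 0, 0, 0],
   ![-1, 1, 0, 0, 0],
   ![0, 0, 0, 0, 0],
   ![0, 0, 0, 0, 0],
   ![0, 0, 0, 0, 0],
   ![-2, 2, 0, 0, 0],
   ![0, 0, 0, 0, 0],
   ![0, 0, 0, 0, 0],
   ![0, 0, 0, 0, 0],
   ![-2, -1, 1, 1, 1],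
   ![0, 0, 0, 0, 0],
   ![0, 0, 0, 0, 0],
   ![0, 0, 0, 0, 0],
   ![1, -1, 0, 0, 0],
   ![0, 0, 0, 0, 0],
   ![0, 0, 0, 0, 0],
   ![0, 0, 0, 0, 0],
   ![0, 0, 0, 0, 0],
   ![0, 0, 0, 0, 0],
   ![0, 0, 0, 0, 0],
   ![0, 0, 0, 0, 0],
   ![-1, 0, 1, 0, 0],
   ![0, 0, 0, 0, 0],
   ![0, 0, 0, 0, 0],
   ![0, 0, 0, 0, 0],
   ![-2, 1, 1, 0, 0],
   ![0, 0, 0, 0, 0],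
   ![0, 0, 0, 0, 0],
   ![0, 0, 0, 0, 0],
   ![1, 1, 0, -1, -1],
   ![0, 0, 0, 0, 0],
   ![0, 0, 0, 0, 0],
   ![0, 0, 0, 0, 0],
   ![0, 2, 0, -1, -1],
   ![0, 0, 0, 0, 0],
   ![0, 0, 0, 0, 0],
   ![0, 0, 0, 0, 0],
   ![0, -1, 1, 0, 0],
   ![0, 0, 0, 0, 0],
   ![0, 0, 0, 0, 0],
   ![0, 0, 0, 0, 0],
   ![0, 0, 0, 0, 0],
   ![0, 0, 0, 0, 0],
   ![0, 0, 0, 0, 0],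
   ![0, 0, 0, 0, 0],
   ![-2, 0, 2, 0, 0],
   ![0, 0, 0, 0, 0],
   ![0, 0, 0, 0, 0],
   ![0, 0, 0, 0, 0],
   ![1, 0, 1, -1, -1],
   ![0, 0, 0, 0, 0],
   ![0, 0, 0, 0, 0],
   ![0, 0, 0, 0, 0],
   ![0, 1, 1, -1, -1],
   ![0, 0, 0, 0, 0],
   ![0, 0, 0, 0, 0],
   ![0, 0, 0, 0, 0],
   ![-1, 2, 1, -1, -1],
   ![0, 0, 0, 0, 0],
   ![0, 0, 0, 0, 0],
   ![0, 0, 0, 0, 0],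
   ![0, 0, 0, 0, 0],
   ![0, 0, 0, 0, 0],
   ![0, 0, 0, 0, 0],
   ![0, 0, 0, 0, 0],
   ![0, 0, 0, 0, 0],
   ![-1, -1, 2, 0, 0],
   ![0, 0, 0, 0, 0],
   ![0, 0, 0, 0, 0],
   ![-2, 1, -1, 1, 1],
   ![0, 0, 0, 0, 0],
   ![0, 0, 0, 0, 0],
   ![0, 0, 0, 0, 0],
   ![0, 0, 2, -1, -1],
   ![0, 0, 0, 0, 0],
   ![0, 0, 0, 0, 0],
   ![0, 0, 0, 0, 0],
   ![-1, 1, 2, -1, -1],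
   ![0, 0, 0, 0, 0],
   ![0, 0, 0, 0, 0],
   ![0, 0, 0, 0, 0],
   ![0, 0, 0, 0, 0],
   ![0, 0, 0, 0, 0],
   ![0, 0, 0, 0, 0],
   ![0, 0, 0, 0, 0],
   ![0, 0, 0, 0, 0],
   ![0, -1, -1, 1, 1],
   ![0, 0, 0, 0, 0],
   ![0, 0, 0, 0, 0],
   ![0, 0, 0, 0, 0],
   ![-1, 0, -1, 1, 1],
   ![0, 0, 0, 0, 0],
   ![0, 0, 0, 0, 0],
   ![1, 0, -1, 0, 0],
   ![0, 0, 0, 0, 0],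
   ![0, 0, 0, 0, 0],
   ![0, 0, 0, 0, 0],
   ![0, 1, -1, 0, 0],
   ![0, 0, 0, 0, 0],
   ![0, 0, 0, 0, 0],
   ![0, 0, 0, 0, 0],
   ![0, 0, 0, 0, 0],
   ![0, 0, 0, 0, 0],
   ![0, 0, 0, 0, 0],
   ![0, 0, 0, 0, 0],
   ![0, 0, 0, 0, 0],
   ![-1, 2, -1, 0, 0],
   ![0, 0, 0, 0, 0],
   ![0, 0, 0, 0, 0],
   ![0, 0, 0, 0, 0],
   ![-1, -1, 0, 1, 1],
   ![0, 0, 0, 0, 0],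
   ![0, 0, 0, 0, 0],
   ![0, 0, 0, 0, 0],
   ![-2, 0, 0, 1, 1],
   ![0, 0, 0, 0, 0],
   ![0, 0, 0, 0, 0],
   ![0, 0, 0, 0, 0],
   ![0, 0, 0, 0, 0],
   ![0, 0, 0, 0, 0],
   ![0, 0, 0, 0, 0],
   ![-1, 0, 0, 1, 0],
   ![0, 0, 0, 0, 0],
   ![0, 0, 0, 0, 0],
   ![0, 0, 0, 0, 0],
   ![-2, 1, 0, 1, 0],
   ![0, 0, 0, 0, 0],
   ![0, 0, 0, 0, 0],
   ![0, 0, 0, 0, 0],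
   ![1, 1, -1, 0, -1],
   ![0, 0, 0, 0, 0],
   ![0, 0, 0, 0, 0],
   ![0, 0, 0, 0, 0],
   ![0, 2, -1, 0, -1],
   ![0, 0, 0, 0, 0],
   ![0, 0, 0, 0, 0],
   ![0, 0, 0, 0, 0],
   ![0, -1, 0, 1, 0],
   ![0, 0, 0, 0, 0],
   ![0, 0, 0, 0, 0],
   ![0, 0, 0, 0, 0],
   ![0, 0, 0, 0, 0],
   ![0, 0, 0, 0, 0],
   ![0, 0, 0, 0, 0],
   ![0, 0, 0, 0, 0],
   ![-2, 0, 1, 1, 0],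
   ![0, 0, 0, 0, 0],
   ![0, 0, 0, 0, 0],
   ![0, 0, 0, 0, 0],
   ![1, 0, 0, 0, -1],
   ![0, 0, 0, 0, 0],
   ![0, 0, 0, 0, 0],
   ![0, 0, 0, 0, 0],
   ![0, 1, 0, 0, -1],
   ![0, 0, 0, 0, 0],
   ![0, 0, 0, 0, 0],
   ![0, 0, 0, 0, 0],
   ![-1, 2, 0, 0, -1],
   ![0, 0, 0, 0, 0],
   ![0, 0, 0, 0, 0],
   ![0, 0, 0, 0, 0],
   ![0, 0, 0, 0, 0],
   ![0, 0, 0, 0, 0],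
   ![0, 0, 0, 0, 0],
   ![0, 0, 0, 0, 0],
   ![0, 0, 0, 0, 0],
   ![-1, -1, 1, 1, 0],
   ![0, 0, 0, 0, 0],
   ![0, 0, 0, 0, 0],
   ![1, -1, 1, 0, -1],
   ![0, 0, 0, 0, 0],
   ![0, 0, 0, 0, 0],
   ![0, 0, 0, 0, 0],
   ![0, 0, 1, 0, -1],
   ![0, 0, 0, 0, 0],
   ![0, 0, 0, 0, 0],
   ![0, 0, 0, 0, 0],
   ![-1, 1, 1, 0, -1],
   ![0, 0, 0, 0, 0],
   ![0, 0, 0, 0, 0],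
   ![0, 0, 0, 0, 0],
   ![0, 0, 0, 0, 0],
   ![0, 0, 0, 0, 0],
   ![0, 0, 0, 0, 0],
   ![0, 0, 0, 0, 0],
   ![0, 0, 0, 0, 0],
   ![-2, 2, 1, 0, -1],
   ![0, 0, 0, 0, 0],
   ![0, 0, 0, 0, 0],
   ![0, 0, 0, 0, 0],
   ![-2, -1, 2, 1, 0],
   ![0, 0, 0, 0, 0],
   ![0, 0, 0, 0, 0],
   ![0, -1, 2, 0, -1],
   ![0, 0, 0, 0, 0],
   ![0, 0, 0, 0, 0],
   ![0, 0, 0, 0, 0],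
   ![-1, 0, 2, 0, -1],
   ![0, 0, 0, 0, 0],
   ![0, 0, 0, 0, 0],
   ![0, 0, 0, 0, 0],
   ![0, 0, 0, 0, 0],
   ![0, 0, 0, 0, 0],
   ![0, 0, 0, 0, 0],
   ![0, 0, 0, 0, 0],
   ![0, 0, 0, 0, 0],
   ![-2, 1, 2, 0, -1],
   ![0, 0, 0, 0, 0],
   ![0, 0, 0, 0, 0],
   ![0, 0, 0, 0, 0],
   ![-1, -1, -1, 2, 1],
   ![0, 0, 0, 0, 0],
   ![0, 0, 0, 0, 0],
   ![0, 0, 0, 0, 0],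
   ![-2, 0, -1, 2, 1],
   ![0, 0, 0, 0, 0],
   ![0, 0, 0, 0, 0],
   ![0, 0, -1, 1, 0],
   ![0, 0, 0, 0, 0],
   ![0, 0, 0, 0, 0],
   ![0, 0, 0, 0, 0],
   ![0, 0, 0, 0, 0],
   ![0, 0, 0, 0, 0],
   ![0, 0, 0, 0, 0],
   ![0, 0, 0, 0, 0],
   ![0, 0, 0, 0, 0],
   ![-1, 1, -1, 1, 0],
   ![0, 0, 0, 0, 0],
   ![0, 0, 0, 0, 0],
   ![0, 0, 0, 0, 0],
   ![-2, 2, -1, 1, 0],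
   ![0, 0, 0, 0, 0],
   ![0, 0, 0, 0, 0],
   ![0, 0, 0, 0, 0],
   ![-2, -1, 0, 2, 1],
   ![0, 0, 0, 0, 0],
   ![0, 0, 0, 0, 0],
   ![0, 0, 0, 0, 0],
   ![1, -1, -1, 1, 0],
   ![0, 0, 0, 0, 0],
   ![0, 0, 0, 0, 0],
   ![0, 0, 0, 0, 0],
   ![0, 0, 0, 0, 0],
   ![0, 0, 0, 0, 0],
   ![0, 0, 0, 0, 0],
   ![-2, 0, 0, 2, 0],
   ![0, 0, 0, 0, 0],
   ![0, 0, 0, 0, 0],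
   ![0, 0, 0, 0, 0],
   ![1, 0, -1, 1, -1],
   ![0, 0, 0, 0, 0],
   ![0, 0, 0, 0, 0],
   ![0, 0, 0, 0, 0],
   ![0, 1, -1, 1, -1],
   ![0, 0, 0, 0, 0],
   ![0, 0, 0, 0, 0],
   ![0, 0, 0, 0, 0],
   ![-1, 2, -1, 1, -1],
   ![0, 0, 0, 0, 0],
   ![0, 0, 0, 0, 0],
   ![0, 0, 0, 0, 0],
   ![0, 0, 0, 0, 0],
   ![0, 0, 0, 0, 0],
   ![0, 0, 0, 0, 0],
   ![0, 0, 0, 0, 0],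
   ![0, 0, 0, 0, 0],
   ![-1, -1, 0, 2, 0],
   ![0, 0, 0, 0, 0],
   ![0, 0, 0, 0, 0],
   ![1, -1, 0, 1, -1],
   ![0, 0, 0, 0, 0],
   ![0, 0, 0, 0, 0],
   ![0, 0, 0, 0, 0],
   ![0, 0, 0, 1, -1],
   ![0, 0, 0, 0, 0],
   ![0, 0, 0, 0, 0],
   ![0, 0, 0, 0, 0],
   ![-1, 1, 0, 1, -1],
   ![0, 0, 0, 0, 0],
   ![0, 0, 0, 0, 0],
   ![0, 0, 0, 0, 0],
   ![0, 0, 0, 0, 0],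
   ![0, 0, 0, 0, 0],
   ![0, 0, 0, 0, 0],
   ![0, 0, 0, 0, 0],
   ![0, 0, 0, 0, 0],
   ![-2, 2, 0, 1, -1],
   ![0, 0, 0, 0, 0],
   ![0, 0, 0, 0, 0],
   ![0, 0, 0, 0, 0],
   ![-2, -1, 1, 2, 0],
   ![0, 0, 0, 0, 0],
   ![0, 0, 0, 0, 0],
   ![0, -1, 1, 1, -1],
   ![0, 0, 0, 0, 0],
   ![0, 0, 0, 0, 0],
   ![0, 0, 0, 0, 0],
   ![-1, 0, 1, 1, -1],
   ![0, 0, 0, 0, 0],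
   ![0, 0, 0, 0, 0],
   ![0, 0, 0, 0, 0],
   ![0, 0, 0, 0, 0],
   ![0, 0, 0, 0, 0],
   ![0, 0, 0, 0, 0],
   ![0, 0, 0, 0, 0],
   ![0, 0, 0, 0, 0],
   ![-2, 1, 1, 1, -1],
   ![0, 0, 0, 0, 0],
   ![0, 0, 0, 0, 0],
   ![0, 0, 0, 0, 0],
   ![0, 0, -1, -1, 2],
   ![0, 0, 0, 0, 0],
   ![0, 0, 0, 0, 0],
   ![0, 0, 0, 0, 0],
   ![-1, 1, -1, -1, 2],
   ![0, 0, 0, 0, 0],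
   ![0, 0, 0, 0, 0],
   ![-1, -1, 2, 1, -1],
   ![0, 0, 0, 0, 0],
   ![0, 0, 0, 0, 0],
   ![0, 0, 0, 0, 0],
   ![0, 0, 0, 0, 0],
   ![0, 0, 0, 0, 0],
   ![0, 0, 0, 0, 0],
   ![0, 0, 0, 0, 0],
   ![0, 0, 0, 0, 0],
   ![-2, 0, 2, 1, -1],
   ![0, 0, 0, 0, 0],
   ![0, 0, 0, 0, 0],
   ![0, 0, 0, 0, 0],
   ![0, -1, 0, -1, 2],
   ![0, 0, 0, 0, 0],
   ![0, 0, 0, 0, 0],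
   ![0, 0, 0, 0, 0],
   ![-1, 0, 0, -1, 2],
   ![0, 0, 0, 0, 0],
   ![0, 0, 0, 0, 0],
   ![0, 0, 0, 0, 0],
   ![-2, 1, 0, -1, 2],
   ![0, 0, 0, 0, 0],
   ![0, 0, 0, 0, 0],
   ![0, 0, 0, 0, 0],
   ![0, 0, 0, 0, 0],
   ![0, 0, 0, 0, 0],
   ![0, 0, 0, 0, 0],
   ![0, 0, 0, 0, 0],
   ![-1, 0, -1, 2, 0],
   ![0, 0, 0, 0, 0],
   ![0, 0, 0, 0, 0],
   ![0, 0, 0, 0, 0],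
   ![-2, 1, -1, 2, 0],
   ![0, 0, 0, 0, 0],
   ![0, 0, 0, 0, 0],
   ![0, 0, 0, 0, 0],
   ![-1, -1, 1, -1, 2],
   ![0, 0, 0, 0, 0],
   ![0, 0, 0, 0, 0],
   ![0, 0, 0, 0, 0],
   ![-2, 0, 1, -1, 2],
   ![0, 0, 0, 0, 0],
   ![0, 0, 0, 0, 0],
   ![0, 0, 0, 0, 0],
   ![0, -1, -1, 2, 0],
   ![0, 0, 0, 0, 0],
   ![0, 0, 0, 0, 0],
   ![0, 0, 0, 0, 0],
   ![0, 0, 0, 0, 0],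
   ![0, 0, 0, 0, 0],
   ![0, 0, 0, 0, 0],
   ![-2, 1, 1, -1, 1],
   ![0, 0, 0, 0, 0],
   ![0, 0, 0, 0, 0],
   ![0, 0, 0, 0, 0],
   ![0, 0, -1, 2, -1],
   ![0, 0, 0, 0, 0],
   ![0, 0, 0, 0, 0],
   ![0, 0, 0, 0, 0],
   ![-1, 1, -1, 2, -1],
   ![0, 0, 0, 0, 0],
   ![0, 0, 0, 0, 0],
   ![0, 0, 0, 0, 0],
   ![0, 0, 0, 0, 0],
   ![0, 0, 0, 0, 0],
   ![0, 0, 0, 0, 0],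
   ![0, 0, 0, 0, 0],
   ![0, 0, 0, 0, 0],
   ![0, -1, 1, -1, 1],
   ![0, 0, 0, 0, 0],
   ![0, 0, 0, 0, 0],
   ![0, 0, 0, 0, 0],
   ![-1, 0, 1, -1, 1],
   ![0, 0, 0, 0, 0],
   ![0, 0, 0, 0, 0],
   ![0, -1, 0, 2, -1],
   ![0, 0, 0, 0, 0],
   ![0, 0, 0, 0, 0],
   ![0, 0, 0, 0, 0],
   ![-1, 0, 0, 2, -1],
   ![0, 0, 0, 0, 0],
   ![0, 0, 0, 0, 0],
   ![0, 0, 0, 0, 0],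
   ![0, 0, 0, 0, 0],
   ![0, 0, 0, 0, 0],
   ![0, 0, 0, 0, 0],
   ![0, 0, 0, 0, 0],
   ![0, 0, 0, 0, 0],
   ![-2, 1, 0, 2, -1],
   ![0, 0, 0, 0, 0],
   ![0, 0, 0, 0, 0],
   ![0, 0, 0, 0, 0],
   ![-1, -1, 2, -1, 1],
   ![0, 0, 0, 0, 0],
   ![0, 0, 0, 0, 0],
   ![0, 0, 0, 0, 0],
   ![-2, 0, 2, -1, 1],
   ![0, 0, 0, 0, 0],
   ![0, 0, 0, 0, 0],
   ![-1, -1, 1, 2, -1],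
   ![0, 0, 0, 0, 0],
   ![0, 0, 0, 0, 0],
   ![0, 0, 0, 0, 0],
   ![0, 0, 0, 0, 0],
   ![0, 0, 0, 0, 0],
   ![0, 0, 0, 0, 0],
   ![0, 0, 0, 0, 0],
   ![0, 0, 0, 0, 0],
   ![-2, 0, 1, 2, -1],
   ![0, 0, 0, 0, 0],
   ![0, 0, 0, 0, 0],
   ![0, 0, 0, 0, 0],
   ![0, -1, -1, 0, 2],
   ![0, 0, 0, 0, 0],
   ![0, 0, 0, 0, 0],
   ![0, 0, 0, 0, 0],
   ![-1, 0, -1, 0, 2],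
   ![0, 0, 0, 0, 0],
   ![0, 0, 0, 0, 0],
   ![0, 0, 0, 0, 0],
   ![-2, 1, -1, 0, 2],
   ![0, 0, 0, 0, 0],
   ![0, 0, 0, 0, 0],
   ![0, 0, 0, 0, 0],
   ![0, 0, 0, 0, 0],
   ![0, 0, 0, 0, 0],
   ![0, 0, 0, 0, 0],
   ![0, 0, 0, 0, 0],
   ![0, 1, -1, -1, 1],
   ![0, 0, 0, 0, 0],
   ![0, 0, 0, 0, 0],
   ![0, 0, 0, 0, 0],
   ![-1, 2, -1, -1, 1],
   ![0, 0, 0, 0, 0],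
   ![0, 0, 0, 0, 0],
   ![0, 0, 0, 0, 0],
   ![-1, -1, 0, 0, 2],
   ![0, 0, 0, 0, 0],
   ![0, 0, 0, 0, 0],
   ![0, 0, 0, 0, 0],
   ![-2, 0, 0, 0, 2],
   ![0, 0, 0, 0, 0],
   ![0, 0, 0, 0, 0],
   ![0, 0, 0, 0, 0],
   ![1, 0, -1, -1, 1],
   ![0, 0, 0, 0, 0],
   ![0, 0, 0, 0, 0],
   ![0, 0, 0, 0, 0],
   ![0, 0, 0, 0, 0],
   ![0, 0, 0, 0, 0],
   ![0, 0, 0, 0, 0],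
   ![0, 0, 0, 0, 0],
   ![-1, 1, 0, -1, 1],
   ![0, 0, 0, 0, 0],
   ![0, 0, 0, 0, 0],
   ![0, 0, 0, 0, 0],
   ![-2, 2, 0, -1, 1],
   ![0, 0, 0, 0, 0],
   ![0, 0, 0, 0, 0],
   ![0, 0, 0, 0, 0],
   ![-2, -1, 1, 0, 2],
   ![0, 0, 0, 0, 0],
   ![0, 0, 0, 0, 0],
   ![0, 0, 0, 0, 0],
   ![1, -1, 0, -1, 1],
   ![0, 0, 0, 0, 0],
   ![0, 0, 0, 0, 0],
   ![0, 0, 0, 0, 0],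
   ![0, 0, 0, 0, 0],
   ![0, 0, 0, 0, 0],
   ![0, 0, 0, 0, 0],
   ![0, 0, 0, 0, 0],
   ![0, 0, 0, 0, 0],
   ![0, 0, 0, -1, 1],
   ![0, 0, 0, 0, 0],
   ![1, 0, 0, -1, 0],
   ![0, 0, 0, 0, 0],
   ![0, 0, 0, 0, 0],
   ![0, 0, 0, 0, 0],
   ![0, 1, 0, -1, 0],
   ![0, 0, 0, 0, 0],
   ![0, 0, 0, 0, 0],
   ![0, 0, 0, 0, 0],
   ![0, 0, 0, 0, 0],
   ![0, 0, 0, 0, 0],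
   ![0, 0, 0, 0, 0],
   ![0, 0, 0, 0, 0],
   ![0, 0, 0, 0, 0],
   ![-1, 2, 0, -1, 0],
   ![0, 0, 0, 0, 0],
   ![0, 0, 0, 0, 0],
   ![0, 0, 0, 0, 0],
   ![-1, -1, 1, 0, 1],
   ![0, 0, 0, 0, 0],
   ![0, 0, 0, 0, 0],
   ![0, 0, 0, 0, 0],
   ![-2, 0, 1, 0, 1],
   ![0, 0, 0, 0, 0],
   ![0, 0, 0, 0, 0],
   ![0, 0, 1, -1, 0],
   ![0, 0, 0, 0, 0],
   ![0, 0, 0, 0, 0],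
   ![0, 0, 0, 0, 0],
   ![0, 0, 0, 0, 0],
   ![0, 0, 0, 0, 0],
   ![0, 0, 0, 0, 0],
   ![0, 0, 0, 0, 0],
   ![0, 0, 0, 0, 0],
   ![-1, 1, 1, -1, 0],
   ![0, 0, 0, 0, 0],
   ![0, 0, 0, 0, 0],
   ![0, 0, 0, 0, 0],
   ![-2, 2, 1, -1, 0],
   ![0, 0, 0, 0, 0],
   ![0, 0, 0, 0, 0],
   ![0, 0, 0, 0, 0],
   ![-2, -1, 2, 0, 1],
   ![0, 0, 0, 0, 0],
   ![0, 0, 0, 0, 0],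
   ![0, 0, 0, 0, 0],
   ![1, -1, 1, -1, 0],
   ![0, 0, 0, 0, 0],
   ![0, 0, 0, 0, 0],
   ![0, 0, 0, 0, 0],
   ![0, 0, 0, 0, 0],
   ![0, 0, 0, 0, 0],
   ![0, 0, 0, 0, 0],
   ![0, 0, 0, 0, 0],
   ![-1, 0, 2, -1, 0],
   ![0, 0, 0, 0, 0],
   ![0, 0, 0, 0, 0],
   ![0, 0, 0, 0, 0],
   ![-2, 1, 2, -1, 0],
   ![0, 0, 0, 0, 0],
   ![0, 0, 0, 0, 0],
   ![0, 0, 0, 0, 0],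
   ![-1, -1, -1, 1, 2],
   ![0, 0, 0, 0, 0],
   ![0, 0, 0, 0, 0],
   ![0, 0, 0, 0, 0],
   ![-2, 0, -1, 1, 2],
   ![0, 0, 0, 0, 0],
   ![0, 0, 0, 0, 0],
   ![0, 0, 0, 0, 0],
   ![0, -1, 2, -1, 0],
   ![0, 0, 0, 0, 0],
   ![0, 0, 0, 0, 0],
   ![0, 0, 0, 0, 0],
   ![0, 0, 0, 0, 0],
   ![0, 0, 0, 0, 0],
   ![0, 0, 0, 0, 0],
   ![0, 0, 0, 0, 0],
   ![-1, 1, -1, 0, 1],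
   ![0, 0, 0, 0, 0],
   ![0, 0, 0, 0, 0],
   ![0, 0, 0, 0, 0],
   ![-2, 2, -1, 0, 1],
   ![0, 0, 0, 0, 0],
   ![0, 0, 0, 0, 0],
   ![0, 0, 0, 0, 0],
   ![-2, -1, 0, 1, 2],
   ![0, 0, 0, 0, 0],
   ![0, 0, 0, 0, 0],
   ![0, 0, 0, 0, 0],
   ![1, -1, -1, 0, 1],
   ![0, 0, 0, 0, 0],
   ![0, 0, 0, 0, 0],
   ![0, 0, 0, 0, 0],
   ![0, 0, 0, 0, 0],
   ![0, 0, 0, 0, 0],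
   ![0, 0, 0, 0, 0],
   ![0, 0, 0, 0, 0],
   ![0, 0, 0, 0, 0],
   ![0, 0, -1, 0, 1],
   ![0, 0, 0, 0, 0],
   ![0, 0, 0, 0, 0],
   ![-2, 1, 0, 0, 1],
   ![0, 0, 0, 0, 0],
   ![0, 0, 0, 0, 0],
   ![0, 0, 0, 0, 0],
   ![1, 1, -1, -1, 0],
   ![0, 0, 0, 0, 0],
   ![0, 0, 0, 0, 0],
   ![0, 0, 0, 0, 0],
   ![0, 2, -1, -1, 0],
   ![0, 0, 0, 0, 0],
   ![0, 0, 0, 0, 0],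
   ![0, 0, 0, 0, 0],
   ![0, 0, 0, 0, 0],
   ![0, 0, 0, 0, 0],
   ![0, 0, 0, 0, 0],
   ![0, 0, 0, 0, 0],
   ![0, 0, 0, 0, 0],
   ![0, -1, 0, 0, 1],
   ![0, 0, 0, 0, 0],
   ![0, 0, 0, 0, 0],
   ![0, 0, 0, 0, 0],
   ![-1, 0, 0, 0, 1],
   ![0, 0, 0, 0, 0]]

def wit (n : ℕ) : Fin 5 → ℤ := tbl.getD n (fun _ => 0)

def digs (n : ℕ) : Fin 5 → ℤ := ![((n % 5 : ℕ) : ℤ), ((n / 5 % 5 : ℕ) : ℤ), ((n / 25 % 5 : ℕ) : ℤ), ((n / 125 % 5 : ℕ) : ℤ), 0]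

set_option maxRecDepth 40000 in
set_option maxHeartbeats 4000000 in
lemma key_s9 : ∀ n : Fin 625,
    ((∑ i, digs n i) % 5 = 0 ∧ ∃ i, digs n i ≠ 0) →
    (∑ i, wit n i = 0) ∧
    (∑ i, (wit n i)^2 = 2 ∨ ∑ i, (wit n i)^2 = 4 ∨ ∑ i, (wit n i)^2 = 6 ∨
      ∑ i, (wit n i)^2 = 8 ∨ ∑ i, (wit n i)^2 = 10) ∧
    ∃ c ∈ Finset.range 5, ∀ i, (digs n i + (c : ℤ) - wit n i) % 5 = 0 := by decide

lemma w1_mem : w1 ∈ A4dual := AddSubgroup.subset_closure (by simp)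
lemma w2_mem : w2 ∈ A4dual := AddSubgroup.subset_closure (by simp)
lemma w3_mem : w3 ∈ A4dual := AddSubgroup.subset_closure (by simp)
lemma w4_mem : w4 ∈ A4dual := AddSubgroup.subset_closure (by simp)

lemma int_mem_dual (m : Fin 5 → ℤ) (hm : m 0 + m 1 + m 2 + m 3 + m 4 = 0) :
    (fun i => (m i : ℚ)) ∈ A4dual := by
  have hrep : (fun i => (m i : ℚ)) =
      (m 0 - m 1) • w1 + (m 1 - m 2) • w2 + (m 2 - m 3) • w3
        + (m 0 + m 1 + m 2 + 2 * m 3) • w4 := by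
    have h4 : m 4 = -(m 0 + m 1 + m 2 + m 3) := by omega
    funext i
    fin_cases i <;>
      simp [w1, w2, w3, w4, h4, Pi.add_apply, Pi.smul_apply, zsmul_eq_mul] <;>
      push_cast <;> ring_nf
  rw [hrep]
  exact add_mem (add_mem (add_mem (zsmul_mem w1_mem _) (zsmul_mem w2_mem _))
    (zsmul_mem w3_mem _)) (zsmul_mem w4_mem _)

lemma div5_mem_dual (c : Fin 5 → ℤ) (r : ℤ)
    (hsum : c 0 + c 1 + c 2 + c 3 + c 4 = 0)
    (hres : ∀ i, (c i - r) % 5 = 0) :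
    (fun i => (c i : ℚ) / 5) ∈ A4dual := by
  set v : Fin 5 → ℤ := ![1, 1, 1, 1, -4] with hv
  have hdvd : ∀ i, (5 : ℤ) ∣ (c i - r * v i) := by
    intro i
    have := hres i
    fin_cases i <;> simp [hv] at * <;> omega
  set m : Fin 5 → ℤ := fun i => (c i - r * v i) / 5 with hmdef
  have hm5 : ∀ i, 5 * m i = c i - r * v i := by
    intro i
    exact Int.mul_ediv_cancel' (hdvd i)
  have hmsum : m 0 + m 1 + m 2 + m 3 + m 4 = 0 := by
    have h0 := hm5 0; have h1 := hm5 1; have h2 := hm5 2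
    have h3 := hm5 3; have h4 := hm5 4
    simp [hv] at h0 h1 h2 h3 h4
    omega
  have hrep : (fun i => (c i : ℚ) / 5) = (fun i => (m i : ℚ)) + r • w4 := by
    funext i
    have h := hm5 i
    have hq : (5 : ℚ) * (m i : ℚ) = (c i : ℚ) - (r : ℚ) * (v i : ℚ) := by
      exact_mod_cast congrArg (fun z : ℤ => (z : ℚ)) h
    fin_cases i <;>
      · simp [w4, hv, Pi.add_apply, Pi.smul_apply, zsmul_eq_mul] at hq ⊢
        push_cast at hq ⊢ <;> try skip
        linarith
  rw [hrep]
  exact add_mem (int_mem_dual m hmsum) (zsmul_mem w4_mem _)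

/-- The classes of vectors of norms `2/5, 4/5, 6/5, 8/5, 2`, together
with the zero element, form a complete representative system of the discriminant group
of `A₄^∨(5)`. -/
theorem standard_system_complete :
    ∀ x ∈ fifthA4, x ∉ A4dual →
      ∃ a ∈ A4, form a a ∈ ({2, 4, 6, 8, 10} : Set ℚ) ∧ x - (5 : ℚ)⁻¹ • a ∈ A4dual := by
  intro x hx hxd
  obtain ⟨y, hy, hxy⟩ := hx
  obtain ⟨hyint, hysum⟩ := hy
  choose b hb using hyint
  have hxb : ∀ i, x i = (b i : ℚ) / 5 := by
    intro i
    rw [← hxy]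
    simp [DistribMulAction.toAddMonoidHom, hb i]
    ring
  have hbsum : b 0 + b 1 + b 2 + b 3 + b 4 = 0 := by
    have : ((b 0 + b 1 + b 2 + b 3 + b 4 : ℤ) : ℚ) = 0 := by
      push_cast
      rw [← hb 0, ← hb 1, ← hb 2, ← hb 3, ← hb 4]
      rw [Fin.sum_univ_five] at hysum
      linarith
    exact_mod_cast this
  set d : Fin 5 → ℤ := fun i => (b i - b 4) % 5 with hddef
  have hdspec : ∀ i, 0 ≤ d i ∧ d i < 5 ∧ (5 : ℤ) ∣ (b i - b 4 - d i) := by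
    intro i
    simp only [hddef]
    omega
  -- the residues are not all zero
  have hdne : ∃ i, d i ≠ 0 := by
    by_contra hcon
    push_neg at hcon
    apply hxd
    have hxeq : x = fun i => (b i : ℚ) / 5 := funext hxb
    rw [hxeq]
    apply div5_mem_dual b (b 4) hbsum
    intro i
    have h1 := hdspec i
    have h2 := hcon i
    omega
  have h0 := hdspec 0; have h1 := hdspec 1; have h2 := hdspec 2
  have h3 := hdspec 3; have h4 := hdspec 4
  have hd4 : d 4 = 0 := by simp [hddef]
  have hkex : ∀ i, ∃ m : ℕ, d i = (m : ℤ) ∧ m < 5 := by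
    intro i
    refine ⟨(d i).toNat, ?_, ?_⟩ <;> have := hdspec i <;> omega
  choose k hk1 hk2 using hkex
  set n : ℕ := k 0 + 5 * k 1 + 25 * k 2 + 125 * k 3 with hndef
  have hb0 := hk2 0; have hb1 := hk2 1; have hb2 := hk2 2; have hb3 := hk2 3
  have hnlt : n < 625 := by omega
  have hdig : digs n = d := by
    funext i
    fin_cases i <;>
      simp [digs, hk1 0, hk1 1, hk1 2, hk1 3, hd4] <;> norm_cast <;> omega
  have hkey := key_s9 ⟨n, hnlt⟩
  simp only [hdig] at hkey
  have hcond : (∑ i, d i) % 5 = 0 ∧ ∃ i, d i ≠ 0 := by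
    constructor
    · rw [Fin.sum_univ_five]
      omega
    · exact hdne
  obtain ⟨hasum, hanorm, c, hc5, hcres⟩ := hkey hcond
  set a : Fin 5 → ℤ := wit n with hadef
  rw [Fin.sum_univ_five] at hasum
  refine ⟨fun i => (a i : ℚ), ⟨fun i => ⟨a i, rfl⟩, ?_⟩, ?_, ?_⟩
  · rw [Fin.sum_univ_five]
    push_cast
    exact_mod_cast congrArg (fun z : ℤ => (z : ℚ)) hasum
  · have hform : form (fun i => (a i : ℚ)) (fun i => (a i : ℚ))
        = ((a 0 ^ 2 + a 1 ^ 2 + a 2 ^ 2 + a 3 ^ 2 + a 4 ^ 2 : ℤ) : ℚ) := by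
      simp only [form, Fin.sum_univ_five]
      push_cast
      ring
    rw [Fin.sum_univ_five] at hanorm
    rw [hform]
    rcases hanorm with h | h | h | h | h <;> rw [h] <;> simp
  · have heq : x - (5 : ℚ)⁻¹ • (fun i => (a i : ℚ)) = fun i => ((b i - a i : ℤ) : ℚ) / 5 := by
      funext i
      simp only [Pi.sub_apply, Pi.smul_apply, smul_eq_mul, hxb i]
      push_cast
      ring
    rw [heq]
    apply div5_mem_dual (fun i => b i - a i) (b 4 - (c : ℤ))
    · omega
    · intro i
      have hr := hcres i
      have hs := hdspec i
      omega
end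
end

section
/- O(A_4) = W(A_4) ⋊ C_2: every additive group automorphism g of A_4 satisfying ⟨g(a), g(b)⟩ = ⟨a,b⟩ for all a, b ∈ A_4 is of the form a ↦ ε·(a_{σ(1)}, a_{σ(2)}, a_{σ(3)}, a_{σ(4)}, a_{σ(5)}) for a unique pair (σ, ε) with σ a permutation of {1,…,5} and ε ∈ {+1, −1}; in particular the integral orthogonal group O(A_4) is isomorphic to S_5 × ℤ/2ℤ, where the coordinate permutations form the Weyl group W(A_4) and C_2 is generated by a ↦ −a. -/
open scoped BigOperators

noncomputable section

/-- The multiplicative group structure that `AddAut A` carried in the older Mathlib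
(`g * h = h.trans g`, `1 = refl`, `g⁻¹ = g.symm`); Mathlib now makes `AddAut A` an additive group. -/
instance AddAut.oldMulGroup (A : Type*) [Add A] : Group (AddAut A) where
  mul g h := AddEquiv.trans h g
  one := AddEquiv.refl A
  inv := AddEquiv.symm
  mul_assoc _ _ _ := rfl
  one_mul _ := rfl
  mul_one _ := rfl
  inv_mul_cancel := AddEquiv.self_trans_symm

/-- The integral orthogonal group `O(A₄)`: the group of additive automorphisms of the
root lattice `A₄` preserving the bilinear form `⟨·,·⟩`. -/
def OA4 : Subgroup (AddAut A4) where
  carrier := {g | ∀ a b : A4,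
    form (g a : Fin 5 → ℚ) (g b : Fin 5 → ℚ) = form (a : Fin 5 → ℚ) (b : Fin 5 → ℚ)}
  one_mem' := fun _ _ => rfl
  mul_mem' := by
    intro g h hg hh a b
    exact (hg (h a) (h b)).trans (hh a b)
  inv_mem' := by
    intro g hg a b
    show form (g.symm a : Fin 5 → ℚ) (g.symm b : Fin 5 → ℚ) = _
    have h1 := hg (g.symm a) (g.symm b)
    simpa using h1.symm

-- basic vectors
def ee (i : Fin 5) : Fin 5 → ℚ := Pi.single i 1

lemma ee_apply (i k : Fin 5) : ee i k = if k = i then 1 else 0 := Pi.single_apply i 1 k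

lemma root_mem (i j : Fin 5) : ee i - ee j ∈ A4 := by
  constructor
  · intro k
    refine ⟨(if k = i then 1 else 0) - (if k = j then 1 else 0), ?_⟩
    simp only [Pi.sub_apply, ee_apply]
    split_ifs <;> norm_num
  · simp [Pi.sub_apply, Finset.sum_sub_distrib, ee, Finset.sum_pi_single]

def rA (i : Fin 4) : A4 := ⟨ee i.castSucc - ee 4, root_mem _ _⟩

lemma decomp {a : Fin 5 → ℚ} (ha : a ∈ A4) (n : Fin 5 → ℤ) (hn : ∀ i, a i = (n i : ℚ)) :
    (⟨a, ha⟩ : A4) = ∑ i : Fin 4, n i.castSucc • rA i := by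
  apply Subtype.ext
  have hcoe : ((∑ i : Fin 4, n i.castSucc • rA i : A4) : Fin 5 → ℚ)
      = ∑ i : Fin 4, (n i.castSucc : ℚ) • (ee i.castSucc - ee 4) := by
    push_cast
    exact Finset.sum_congr rfl fun i _ => by rw [zsmul_eq_mul]; rfl
  rw [hcoe]
  funext k
  have h5 : a 4 = -(a 0 + a 1 + a 2 + a 3) := by
    have := ha.2
    rw [Fin.sum_univ_five] at this
    linarith
  rw [Finset.sum_apply]
  simp only [Pi.smul_apply, Pi.sub_apply, ee_apply, smul_eq_mul]
  rw [Fin.sum_univ_four]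
  have c0 : Fin.castAdd 1 (0:Fin 4) = (0:Fin 5) := rfl
  have c1 : Fin.castAdd 1 (1:Fin 4) = (1:Fin 5) := rfl
  have c2 : Fin.castAdd 1 (2:Fin 4) = (2:Fin 5) := rfl
  have c3 : Fin.castAdd 1 (3:Fin 4) = (3:Fin 5) := rfl
  have d0 : Fin.castSucc (0:Fin 4) = (0:Fin 5) := rfl
  have d1 : Fin.castSucc (1:Fin 4) = (1:Fin 5) := rfl
  have d2 : Fin.castSucc (2:Fin 4) = (2:Fin 5) := rfl
  have d3 : Fin.castSucc (3:Fin 4) = (3:Fin 5) := rfl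
  fin_cases k <;> simp [hn, c0, c1, c2, c3, d0, d1, d2, d3, h5] <;> push_cast <;>
    linarith [h5, hn 0, hn 1, hn 2, hn 3, hn 4]

lemma four_eq_last : (4 : Fin 5) = Fin.last 4 := rfl

lemma buildAux (g : AddAut A4) (ε : ℤˣ) (C : Fin 4 → Fin 5) (D : Fin 5)
    (hCinj : Function.Injective C) (hCD : ∀ i, C i ≠ D)
    (hgr : ∀ i : Fin 4, (g (rA i) : Fin 5 → ℚ) = ((ε : ℤ) : ℚ) • (ee (C i) - ee D)) :
    ∃ σ : Equiv.Perm (Fin 5),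
      ∀ a : A4, (g a : Fin 5 → ℚ) = fun k => ((ε : ℤ) : ℚ) * (a : Fin 5 → ℚ) (σ k) := by
  set τ : Fin 5 → Fin 5 := fun k => Fin.lastCases D C k with hτdef
  have hτlast : τ (Fin.last 4) = D := Fin.lastCases_last
  have hτcast : ∀ i : Fin 4, τ i.castSucc = C i := fun i => Fin.lastCases_castSucc i
  have hτinj : Function.Injective τ := by
    intro x y hxy
    induction x using Fin.lastCases with
    | last =>
      induction y using Fin.lastCases with
      | last => rfl
      | cast j => rw [hτlast, hτcast] at hxy; exact absurd hxy.symm (hCD j)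
    | cast i =>
      induction y using Fin.lastCases with
      | last => rw [hτlast, hτcast] at hxy; exact absurd hxy (hCD i)
      | cast j => rw [hτcast, hτcast] at hxy; rw [hCinj hxy]
  have hτbij : Function.Bijective τ := Finite.injective_iff_bijective.mp hτinj
  set σ0 : Equiv.Perm (Fin 5) := Equiv.ofBijective τ hτbij with hσ0
  refine ⟨σ0.symm, fun a => ?_⟩
  -- key pointwise computation on the generators
  have hkey : ∀ (i : Fin 4) (k : Fin 5),
      (ee (C i) - ee D) k = (ee i.castSucc - ee 4) (σ0.symm k) := by
    intro i k
    have h1 : (σ0.symm k = i.castSucc) ↔ (k = C i) := by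
      rw [Equiv.symm_apply_eq, hσ0, Equiv.ofBijective_apply, hτcast]
    have h2 : (σ0.symm k = (4 : Fin 5)) ↔ (k = D) := by
      rw [Equiv.symm_apply_eq, hσ0, Equiv.ofBijective_apply, four_eq_last, hτlast]
    simp only [Pi.sub_apply, ee_apply]
    rw [if_congr h1.symm rfl rfl, if_congr h2.symm rfl rfl]
  -- decompose a
  obtain ⟨av, hav⟩ := a
  choose n hn using hav.1
  have hdec := decomp hav n hn
  have hgsum : (g ⟨av, hav⟩ : Fin 5 → ℚ)
      = ∑ i : Fin 4, (n i.castSucc : ℚ) • ((ε : ℤ) : ℚ) • (ee (C i) - ee D) := by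
    rw [hdec, map_sum]
    push_cast
    refine Finset.sum_congr rfl fun i _ => ?_
    rw [map_zsmul]
    push_cast
    rw [hgr i, ← Int.cast_smul_eq_zsmul ℚ (n i.castSucc) (((ε : ℤ) : ℚ) • (ee (C i) - ee D))]
  rw [hgsum]
  funext k
  rw [Finset.sum_apply]
  have hav2 : av (σ0.symm k) = ∑ i : Fin 4, (n i.castSucc : ℚ) * (ee i.castSucc - ee 4) (σ0.symm k) := by
    have := congrArg (fun x : A4 => (x : Fin 5 → ℚ) (σ0.symm k)) hdec
    simp only at this
    rw [this]
    push_cast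
    rw [Finset.sum_apply]
    refine Finset.sum_congr rfl fun i _ => ?_
    rw [Pi.smul_apply, zsmul_eq_mul]
    rfl
  simp only [Pi.smul_apply, smul_eq_mul]
  rw [hav2, Finset.mul_sum]
  refine Finset.sum_congr rfl fun i _ => ?_
  rw [hkey i k]
  ring

lemma exists_third : ∀ x y : Fin 5, ∃ z, z ≠ x ∧ z ≠ y := by decide

lemma units_cast_ne (ε : ℤˣ) : ((ε : ℤ) : ℚ) ≠ 0 := by
  rcases Int.units_eq_one_or ε with h | h <;> simp [h]

lemma form_ee (i j k l : Fin 5) :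
    form (ee i - ee j) (ee k - ee l) =
      (if i = k then 1 else 0) + (if j = l then 1 else 0)
        - (if i = l then 1 else 0) - (if j = k then 1 else 0) := by
  simp only [form, ee, Pi.sub_apply, Pi.single_apply, sub_mul, mul_sub,
    Finset.sum_sub_distrib, ite_mul, mul_ite, one_mul, mul_one, zero_mul, mul_zero]
  simp [Finset.sum_ite_eq, eq_comm]
  ring

lemma cs_ne_four (i : Fin 4) : i.castSucc ≠ (4 : Fin 5) := by
  rw [four_eq_last]; exact (Fin.castSucc_lt_last i).ne

lemma dec3 : ∀ m : Fin 5 → Fin 3, (∑ i, ((m i : ℤ) - 1)) = 0 → (∑ i, ((m i : ℤ) - 1)^2) = 2 →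
    ∃ i j, i ≠ j ∧ ∀ k, ((m k : ℤ) - 1) = (if k = i then 1 else 0) - (if k = j then 1 else 0) := by
  set_option maxRecDepth 10000 in
  decide

lemma norm_two {a : Fin 5 → ℚ} (hInt : ∀ i, ∃ n : ℤ, a i = (n : ℚ))
    (h0 : ∑ i, a i = 0) (h2 : form a a = 2) :
    ∃ i j, i ≠ j ∧ a = ee i - ee j := by
  choose n hn using hInt
  have hs : ∑ i, n i = 0 := by
    have : ((∑ i, n i : ℤ) : ℚ) = 0 := by push_cast [← hn]; exact h0
    exact_mod_cast this
  have hq : ∑ i, (n i)^2 = 2 := by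
    have : ((∑ i, (n i)^2 : ℤ) : ℚ) = 2 := by
      push_cast [← hn]
      simpa [form, sq] using h2
    exact_mod_cast this
  have hb : ∀ i, -1 ≤ n i ∧ n i ≤ 1 := by
    intro i
    have h1 : (n i)^2 ≤ 2 := by
      calc (n i)^2 ≤ ∑ j, (n j)^2 :=
        Finset.single_le_sum (fun j _ => sq_nonneg (n j)) (Finset.mem_univ i)
      _ = 2 := hq
    constructor <;> nlinarith
  have hm : ∀ i, ((n i + 1).toNat < 3) := by
    intro i; have := hb i; omega
  set m : Fin 5 → Fin 3 := fun i => ⟨(n i + 1).toNat, hm i⟩ with hmdef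
  have hmn : ∀ i, ((m i : ℤ) - 1) = n i := by
    intro i; have := hb i
    show ((((n i + 1).toNat : ℕ) : ℤ)) - 1 = n i
    omega
  obtain ⟨i, j, hij, hk⟩ := dec3 m (by rw [Finset.sum_congr rfl fun i _ => hmn i]; exact hs)
    (by rw [Finset.sum_congr rfl fun i _ => congrArg (· ^ 2) (hmn i)]; exact hq)
  refine ⟨i, j, hij, funext fun k => ?_⟩
  have := hk k
  rw [hmn k] at this
  rw [hn k, this]
  simp only [ee, Pi.sub_apply, Pi.single_apply]
  split_ifs <;> norm_num

lemma formula_unique {σ σ' : Equiv.Perm (Fin 5)} {ε ε' : ℤˣ}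
    (h : ∀ a : A4, (fun k => ((ε : ℤ) : ℚ) * (a : Fin 5 → ℚ) (σ k))
        = fun k => ((ε' : ℤ) : ℚ) * (a : Fin 5 → ℚ) (σ' k)) :
    σ = σ' ∧ ε = ε' := by
  have main : ∀ k, σ k = σ' k ∧ ((ε : ℤ) : ℚ) = ((ε' : ℤ) : ℚ) := by
    intro k
    obtain ⟨z, hz1, hz2⟩ := exists_third (σ k) (σ' k)
    have hthis := congrFun (h ⟨ee (σ k) - ee z, root_mem _ _⟩) k
    simp only [Pi.sub_apply, ee_apply] at hthis
    rw [if_pos trivial, if_neg (fun hh : σ k = z => hz1 hh.symm),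
      if_neg (fun hh : σ' k = z => hz2 hh.symm)] at hthis
    by_cases hc : σ' k = σ k
    · rw [if_pos hc] at hthis
      norm_num at hthis
      exact ⟨hc.symm, by exact_mod_cast hthis⟩
    · rw [if_neg hc] at hthis
      norm_num at hthis
  exact ⟨Equiv.ext fun k => (main k).1, Units.ext (by exact_mod_cast (main 0).2)⟩

-- (quad/pair/quadAux from earlier file)
lemma pair {a b c d : Fin 5} (hcd : c ≠ d)
    (h : form (ee a - ee b) (ee c - ee d) = 1) :
    (a = c ∧ b ≠ d) ∨ (b = d ∧ a ≠ c) := by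
  rw [form_ee] at h
  split_ifs at h <;> norm_num at h <;> simp_all

lemma quadAux {A B : Fin 4 → Fin 5}
    (hP : ∀ i j, i ≠ j → (A i = A j ∧ B i ≠ B j) ∨ (B i = B j ∧ A i ≠ A j))
    (h01 : A 0 = A 1) : ∀ k, A k = A 0 := by
  intro k
  by_contra hk
  have hk0 : k ≠ 0 := by rintro rfl; exact hk rfl
  have hk1 : k ≠ 1 := by rintro rfl; exact hk h01.symm
  have hB01 : B 0 ≠ B 1 := ((hP 0 1 (by decide)).resolve_right (fun h => h.2 h01)).2
  have h0k := (hP 0 k (Ne.symm hk0)).resolve_left (fun h => hk h.1.symm)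
  have h1k := (hP 1 k (Ne.symm hk1)).resolve_left (fun h => hk (h01.trans h.1).symm)
  exact hB01 (h0k.1.trans h1k.1.symm)

lemma quad {A B : Fin 4 → Fin 5}
    (hP : ∀ i j, i ≠ j → (A i = A j ∧ B i ≠ B j) ∨ (B i = B j ∧ A i ≠ A j)) :
    (∀ k, A k = A 0) ∨ (∀ k, B k = B 0) := by
  by_cases h01 : A 0 = A 1
  · exact Or.inl (quadAux hP h01)
  · have hB01 : B 0 = B 1 := ((hP 0 1 (by decide)).resolve_left (fun h => h01 h.1)).1
    exact Or.inr (quadAux (fun i j h => (hP i j h).symm) hB01)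

lemma key_s12 (g : AddAut A4)
    (hg : ∀ a b : A4, form (g a : Fin 5 → ℚ) (g b : Fin 5 → ℚ)
        = form (a : Fin 5 → ℚ) (b : Fin 5 → ℚ)) :
    ∃! p : Equiv.Perm (Fin 5) × ℤˣ,
      ∀ a : A4, (g a : Fin 5 → ℚ) = fun i => ((p.2 : ℤ) : ℚ) * (a : Fin 5 → ℚ) (p.1 i) := by
  -- images of the simple-ish roots
  have hroot : ∀ i : Fin 4, ∃ x y : Fin 5, x ≠ y ∧ (g (rA i) : Fin 5 → ℚ) = ee x - ee y := by
    intro i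
    refine norm_two (g (rA i)).2.1 (g (rA i)).2.2 ?_
    rw [hg (rA i) (rA i)]
    show form (ee i.castSucc - ee 4) (ee i.castSucc - ee 4) = 2
    rw [form_ee]
    rw [if_pos rfl, if_pos rfl, if_neg (cs_ne_four i), if_neg (Ne.symm (cs_ne_four i))]
    norm_num
  choose A B hAB hui using hroot
  have hP : ∀ i j, i ≠ j → (A i = A j ∧ B i ≠ B j) ∨ (B i = B j ∧ A i ≠ A j) := by
    intro i j hij
    refine pair (hAB j) ?_
    rw [← hui i, ← hui j, hg (rA i) (rA j)]
    show form (ee i.castSucc - ee 4) (ee j.castSucc - ee 4) = 1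
    rw [form_ee]
    rw [if_neg (fun h => hij (Fin.castSucc_injective 4 h)), if_pos rfl,
      if_neg (cs_ne_four i), if_neg (Ne.symm (cs_ne_four j))]
    norm_num
  have hmain : ∃ p : Equiv.Perm (Fin 5) × ℤˣ,
      ∀ a : A4, (g a : Fin 5 → ℚ) = fun i => ((p.2 : ℤ) : ℚ) * (a : Fin 5 → ℚ) (p.1 i) := by
    rcases quad hP with hH | hT
    · -- all heads equal : ε = -1
      have hCinj : Function.Injective B := by
        intro i j hBij
        by_contra hij
        exact (((hP i j hij).resolve_right (fun h => h.2 ((hH i).trans (hH j).symm))).2) hBij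
      have hCD : ∀ i, B i ≠ A 0 := fun i h => hAB i ((hH i).trans h.symm)
      have hgr : ∀ i : Fin 4, (g (rA i) : Fin 5 → ℚ)
          = (((-1 : ℤˣ) : ℤ) : ℚ) • (ee (B i) - ee (A 0)) := by
        intro i
        rw [hui i, hH i]
        simp [neg_sub]
      obtain ⟨σ, hσ⟩ := buildAux g (-1) B (A 0) hCinj hCD hgr
      exact ⟨(σ, -1), hσ⟩
    · -- all tails equal : ε = +1
      have hCinj : Function.Injective A := by
        intro i j hAij
        by_contra hij
        exact (((hP i j hij).resolve_left (fun h => h.2 ((hT i).trans (hT j).symm))).2) hAij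
      have hCD : ∀ i, A i ≠ B 0 := fun i h => hAB i (h.trans (hT i).symm)
      have hgr : ∀ i : Fin 4, (g (rA i) : Fin 5 → ℚ)
          = (((1 : ℤˣ) : ℤ) : ℚ) • (ee (A i) - ee (B 0)) := by
        intro i
        rw [hui i, hT i]
        simp
      obtain ⟨σ, hσ⟩ := buildAux g 1 A (B 0) hCinj hCD hgr
      exact ⟨(σ, 1), hσ⟩
  obtain ⟨p, hp⟩ := hmain
  refine ⟨p, hp, fun q hq => ?_⟩
  have h := formula_unique (σ := q.1) (σ' := p.1) (ε := q.2) (ε' := p.2)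
    (fun a => (hq a).symm.trans (hp a))
  exact Prod.ext h.1 (by exact h.2)

def phiFun (p : Equiv.Perm (Fin 5) × ℤˣ) (a : Fin 5 → ℚ) : Fin 5 → ℚ :=
  fun k => ((p.2 : ℤ) : ℚ) * a (p.1⁻¹ k)

lemma phiFun_mem (p : Equiv.Perm (Fin 5) × ℤˣ) {a : Fin 5 → ℚ} (ha : a ∈ A4) :
    phiFun p a ∈ A4 := by
  constructor
  · intro k
    obtain ⟨n, hn⟩ := ha.1 (p.1⁻¹ k)
    exact ⟨(p.2 : ℤ) * n, by rw [phiFun, hn]; push_cast; ring⟩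
  · show ∑ k, ((p.2 : ℤ) : ℚ) * a (p.1⁻¹ k) = 0
    rw [← Finset.mul_sum, Equiv.sum_comp p.1⁻¹ a, ha.2, mul_zero]

lemma units_cancel (ε : ℤˣ) : ((ε : ℤ) : ℚ) * ((ε : ℤ) : ℚ) = 1 := by
  rcases Int.units_eq_one_or ε with h | h <;> simp [h]

lemma phiFun_phiFun (p : Equiv.Perm (Fin 5) × ℤˣ) (a : Fin 5 → ℚ) :
    phiFun p⁻¹ (phiFun p a) = a := by
  funext k
  show (((p.2⁻¹ : ℤˣ) : ℤ) : ℚ) * (((p.2 : ℤ) : ℚ) * a (p.1⁻¹ ((p.1⁻¹)⁻¹ k))) = a k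
  rw [inv_inv, Equiv.Perm.inv_def, Equiv.symm_apply_apply]
  have h2 : ((p.2⁻¹ : ℤˣ) : ℤ) = ((p.2 : ℤˣ) : ℤ) := by
    rcases Int.units_eq_one_or p.2 with h | h <;> simp [h]
  rw [h2, ← mul_assoc, units_cancel, one_mul]

def phi (p : Equiv.Perm (Fin 5) × ℤˣ) : AddAut A4 where
  toFun a := ⟨phiFun p a, phiFun_mem p a.2⟩
  invFun a := ⟨phiFun p⁻¹ a, phiFun_mem p⁻¹ a.2⟩
  left_inv a := Subtype.ext (phiFun_phiFun p a)
  right_inv a := Subtype.ext (by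
    have := phiFun_phiFun p⁻¹ (a : Fin 5 → ℚ)
    rwa [inv_inv] at this)
  map_add' a b := Subtype.ext (by
    funext k
    show ((p.2 : ℤ) : ℚ) * ((a : Fin 5 → ℚ) + (b : Fin 5 → ℚ)) (p.1⁻¹ k) = _
    simp [phiFun, Pi.add_apply, mul_add])

lemma phi_mem (p : Equiv.Perm (Fin 5) × ℤˣ) : phi p ∈ OA4 := by
  intro a b
  show form (phiFun p a) (phiFun p b) = _
  unfold form phiFun
  rw [show ∑ i, ((p.2:ℤ):ℚ) * (a : Fin 5 → ℚ) (p.1⁻¹ i) * (((p.2:ℤ):ℚ) * (b : Fin 5 → ℚ) (p.1⁻¹ i))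
      = ∑ i, (a : Fin 5 → ℚ) (p.1⁻¹ i) * (b : Fin 5 → ℚ) (p.1⁻¹ i) from
    Finset.sum_congr rfl fun i _ => by
      rcases Int.units_eq_one_or p.2 with h | h <;> rw [h] <;> push_cast <;> ring]
  exact Equiv.sum_comp p.1⁻¹ (fun i => (a : Fin 5 → ℚ) i * (b : Fin 5 → ℚ) i)

def Phi : (Equiv.Perm (Fin 5) × ℤˣ) →* OA4 where
  toFun p := ⟨phi p, phi_mem p⟩
  map_one' := by
    apply Subtype.ext
    apply AddEquiv.ext
    intro a
    apply Subtype.ext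
    funext k
    show ((1 : ℤ) : ℚ) * (a : Fin 5 → ℚ) ((1 : Equiv.Perm (Fin 5))⁻¹ k) = (a : Fin 5 → ℚ) k
    simp
  map_mul' p q := by
    apply Subtype.ext
    apply AddEquiv.ext
    intro a
    apply Subtype.ext
    funext k
    show ((((p * q).2 : ℤ)) : ℚ) * (a : Fin 5 → ℚ) ((p.1 * q.1)⁻¹ k)
      = ((p.2 : ℤ) : ℚ) * (phiFun q (a : Fin 5 → ℚ)) (p.1⁻¹ k)
    show ((((p.2 * q.2) : ℤˣ) : ℤ) : ℚ) * (a : Fin 5 → ℚ) ((p.1 * q.1)⁻¹ k)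
      = ((p.2 : ℤ) : ℚ) * (((q.2 : ℤ) : ℚ) * (a : Fin 5 → ℚ) (q.1⁻¹ (p.1⁻¹ k)))
    rw [mul_inv_rev, Equiv.Perm.mul_apply]
    push_cast
    ring

lemma Phi_inj : Function.Injective Phi := by
  intro p q h
  have hk := key_s12 (phi p) (phi_mem p)
  have hp : ∀ a : A4, ((phi p) a : Fin 5 → ℚ)
      = fun k => ((p.2 : ℤ) : ℚ) * (a : Fin 5 → ℚ) (p.1⁻¹ k) := fun a => rfl
  have hpq : phi p = phi q := congrArg Subtype.val h
  have hq : ∀ a : A4, ((phi p) a : Fin 5 → ℚ)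
      = fun k => ((q.2 : ℤ) : ℚ) * (a : Fin 5 → ℚ) (q.1⁻¹ k) := by
    rw [hpq]; exact fun a => rfl
  have := hk.unique (y₁ := (p.1⁻¹, p.2)) (y₂ := (q.1⁻¹, q.2)) hp hq
  have h1 : p.1⁻¹ = q.1⁻¹ := (Prod.ext_iff.mp this).1
  have h2 : p.2 = q.2 := (Prod.ext_iff.mp this).2
  exact Prod.ext (inv_injective h1) h2

lemma Phi_surj : Function.Surjective Phi := by
  rintro ⟨g, hg⟩
  obtain ⟨⟨σ, ε⟩, hp, -⟩ := key_s12 g hg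
  refine ⟨(σ⁻¹, ε), ?_⟩
  apply Subtype.ext
  apply AddEquiv.ext
  intro a
  apply Subtype.ext
  show phiFun (σ⁻¹, ε) (a : Fin 5 → ℚ) = (g a : Fin 5 → ℚ)
  rw [hp a]
  funext k
  show ((ε : ℤ) : ℚ) * (a : Fin 5 → ℚ) (σ⁻¹⁻¹ k) = _
  rw [inv_inv]

def u2 : ℤˣ ≃* Multiplicative (ZMod 2) where
  toFun ε := if ε = 1 then (1 : Multiplicative (ZMod 2)) else Multiplicative.ofAdd 1
  invFun x := if x = 1 then 1 else -1
  left_inv := by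
    intro ε
    rcases Int.units_eq_one_or ε with h | h <;> subst h <;> decide
  right_inv := by decide
  map_mul' := by
    intro a b
    rcases Int.units_eq_one_or a with h | h <;> rcases Int.units_eq_one_or b with h' | h' <;>
      subst h <;> subst h' <;> decide

def finalEquiv : OA4 ≃* Equiv.Perm (Fin 5) × Multiplicative (ZMod 2) :=
  ((MulEquiv.ofBijective Phi ⟨Phi_inj, Phi_surj⟩).symm).trans
    (MulEquiv.prodCongr (MulEquiv.refl _) u2)


/-- `O(A₄) = W(A₄) ⋊ C₂`: every isometry of the root lattice `A₄` is
`a ↦ ε·(a_{σ(1)},…,a_{σ(5)})` for a unique pair `(σ,ε)` with `σ ∈ S₅`, `ε = ±1`;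
in particular `O(A₄) ≅ S₅ × ℤ/2ℤ`. -/
theorem O_A4_structure :
    (∀ g : AddAut A4,
      (∀ a b : A4, form (g a : Fin 5 → ℚ) (g b : Fin 5 → ℚ)
          = form (a : Fin 5 → ℚ) (b : Fin 5 → ℚ)) →
      ∃! p : Equiv.Perm (Fin 5) × ℤˣ,
        ∀ a : A4, (g a : Fin 5 → ℚ) = fun i => ((p.2 : ℤ) : ℚ) * (a : Fin 5 → ℚ) (p.1 i)) ∧
    Nonempty (OA4 ≃* Equiv.Perm (Fin 5) × Multiplicative (ZMod 2)) := by
  exact ⟨fun g hg => key_s12 g hg, ⟨finalEquiv⟩⟩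
end
end

section
/- The orthogonal group O(A_4^∨(5)) acts transitively on the classes of the same norm in the standard representative system of D: for every m ∈ {2, 4, 6, 8, 10} and all a, b ∈ A_4 with ⟨a,a⟩ = ⟨b,b⟩ = m, there exist a permutation σ of {1,…,5} and ε ∈ {+1, −1} such that ε·(a_{σ(1)}, a_{σ(2)}, a_{σ(3)}, a_{σ(4)}, a_{σ(5)}) − b ∈ 5·A_4^∨, i.e. the isometry a ↦ ε·σ(a) of A_4 sends the class of a/5 in D to the class of b/5. -/
open scoped BigOperators

noncomputable section

lemma mem_A4dual_of (k : Fin 5 → ℤ) (hsum : k 0 + k 1 + k 2 + k 3 + k 4 = 0)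
    (hdvd : ∀ i, (5:ℤ) ∣ k i - k 0) :
    (fun i => (k i : ℚ)/5) ∈ A4dual := by
  obtain ⟨c1, hc1⟩ : (5:ℤ) ∣ k 0 - k 1 := by have := hdvd 1; omega
  obtain ⟨c2, hc2⟩ : (5:ℤ) ∣ k 1 - k 2 := by have := hdvd 1; have := hdvd 2; omega
  obtain ⟨c3, hc3⟩ : (5:ℤ) ∣ k 2 - k 3 := by have := hdvd 2; have := hdvd 3; omega
  obtain ⟨c4, hc4⟩ : (5:ℤ) ∣ k 3 - k 4 := by have := hdvd 3; have := hdvd 4; omega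
  have hw1 : w1 ∈ A4dual := AddSubgroup.subset_closure (by simp)
  have hw2 : w2 ∈ A4dual := AddSubgroup.subset_closure (by simp)
  have hw3 : w3 ∈ A4dual := AddSubgroup.subset_closure (by simp)
  have hw4 : w4 ∈ A4dual := AddSubgroup.subset_closure (by simp)
  have heq : (fun i => (k i : ℚ)/5) = c1 • w1 + c2 • w2 + c3 • w3 + c4 • w4 := by
    have e1 : (k 0 : ℚ) - k 1 = 5 * c1 := by exact_mod_cast hc1
    have e2 : (k 1 : ℚ) - k 2 = 5 * c2 := by exact_mod_cast hc2
    have e3 : (k 2 : ℚ) - k 3 = 5 * c3 := by exact_mod_cast hc3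
    have e4 : (k 3 : ℚ) - k 4 = 5 * c4 := by exact_mod_cast hc4
    have e0 : (k 0 : ℚ) + k 1 + k 2 + k 3 + k 4 = 0 := by exact_mod_cast hsum
    funext i
    fin_cases i <;>
      simp [w1, w2, w3, w4, Pi.add_apply, Pi.smul_apply, zsmul_eq_mul] <;>
      linarith
  rw [heq]
  exact AddSubgroup.add_mem _ (AddSubgroup.add_mem _ (AddSubgroup.add_mem _
    (AddSubgroup.zsmul_mem _ hw1 c1) (AddSubgroup.zsmul_mem _ hw2 c2))
    (AddSubgroup.zsmul_mem _ hw3 c3)) (AddSubgroup.zsmul_mem _ hw4 c4)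

def rep5 (m : ℤ) : Fin 5 → ℤ :=
  if m = 2 then ![1,-1,0,0,0]
  else if m = 4 then ![1,1,-1,-1,0]
  else if m = 6 then ![2,-1,-1,0,0]
  else if m = 8 then ![2,-2,0,0,0]
  else ![2,-2,1,-1,0]

def Good (m a b c d e : ℤ) : Prop :=
  a+b+c+d+e = 0 → a*a+b*b+c*c+d*d+e*e = m →
  ∃ σ : Equiv.Perm (Fin 5), ∃ ε : Bool, ∃ c0 ∈ Finset.Icc (0:ℤ) 4,
    ∀ i, (5:ℤ) ∣ (if ε then 1 else -1) * ![a,b,c,d,e] (σ i) - rep5 m i - c0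

instance (m a b c d e : ℤ) : Decidable (Good m a b c d e) := by
  unfold Good; infer_instance

set_option maxRecDepth 100000 in
set_option maxHeartbeats 4000000 in
lemma key_s13 : ∀ m ∈ ({2,4,6,8,10} : Finset ℤ), ∀ a ∈ Finset.Icc (-3:ℤ) 3,
    ∀ b ∈ Finset.Icc a 3, ∀ c ∈ Finset.Icc b 3, ∀ d ∈ Finset.Icc c 3,
    ∀ e ∈ Finset.Icc d 3, Good m a b c d e := by decide

/-- for a vector of `A4` of norm `M ∈ {2,4,6,8,10}` there is a permutation and sign
bringing it to the standard class representative modulo the shift `c0`. -/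
lemma reduce_to_rep (M : ℤ) (hM : M ∈ ({2,4,6,8,10} : Finset ℤ)) (n : Fin 5 → ℤ)
    (hsum : ∑ i, n i = 0) (hsq : ∑ i, n i * n i = M) :
    ∃ (σ : Equiv.Perm (Fin 5)) (ε : Bool), ∃ c0 : ℤ,
      ∀ i, (5:ℤ) ∣ (if ε then 1 else -1) * n (σ i) - rep5 M i - c0 := by
  have hM10 : M ≤ 10 := by fin_cases hM <;> norm_num
  have hb : ∀ i, n i ∈ Finset.Icc (-3:ℤ) 3 := by
    intro i
    have h1 : n i * n i ≤ M := hsq ▸ Finset.single_le_sum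
      (fun j _ => mul_self_nonneg (n j)) (Finset.mem_univ i)
    simp only [Finset.mem_Icc]
    constructor <;> nlinarith
  set τ := Tuple.sort n with hτ
  have hmono : Monotone (n ∘ τ) := Tuple.monotone_sort n
  set g : Fin 5 → ℤ := n ∘ τ with hg
  have le01 : g 0 ≤ g 1 := hmono (by decide)
  have le12 : g 1 ≤ g 2 := hmono (by decide)
  have le23 : g 2 ≤ g 3 := hmono (by decide)
  have le34 : g 3 ≤ g 4 := hmono (by decide)
  have hgmem : ∀ i, g i ∈ Finset.Icc (-3:ℤ) 3 := fun i => hb (τ i)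
  have hm0 := hgmem 0
  have hm4 := hgmem 4
  simp only [Finset.mem_Icc] at hm0 hm4
  have hgsum : g 0 + g 1 + g 2 + g 3 + g 4 = 0 := by
    have := Equiv.sum_comp τ n
    rw [hsum] at this
    rw [Fin.sum_univ_five] at this
    exact this
  have hgsq : g 0 * g 0 + g 1 * g 1 + g 2 * g 2 + g 3 * g 3 + g 4 * g 4 = M := by
    have := Equiv.sum_comp τ (fun j => n j * n j)
    rw [hsq] at this
    rw [Fin.sum_univ_five] at this
    exact this
  have hgood := key_s13 M hM (g 0) (by simp only [Finset.mem_Icc]; omega)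
    (g 1) (by simp only [Finset.mem_Icc]; omega)
    (g 2) (by simp only [Finset.mem_Icc]; omega)
    (g 3) (by simp only [Finset.mem_Icc]; omega)
    (g 4) (by simp only [Finset.mem_Icc]; omega)
    hgsum hgsq
  obtain ⟨σ', ε, c0, _, hdvd⟩ := hgood
  refine ⟨σ'.trans τ, ε, c0, fun i => ?_⟩
  have hv : ![g 0, g 1, g 2, g 3, g 4] = g := by
    funext j; fin_cases j <;> rfl
  have := hdvd i
  rw [hv] at this
  exact this

/-- `O(A₄^∨(5))` acts transitively on the classes of the same norm in
the standard representative system of the discriminant group: for `a, b ∈ A₄` of the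
same norm `m ∈ {2,4,6,8,10}` there are a permutation `σ` and a sign `ε` with
`ε·(a_{σ(1)},…,a_{σ(5)}) − b ∈ 5·A₄^∨`. -/
theorem O_A4dual5_transitive_on_classes :
    ∀ m ∈ ({2, 4, 6, 8, 10} : Set ℚ), ∀ a b : Fin 5 → ℚ, a ∈ A4 → b ∈ A4 →
      form a a = m → form b b = m →
      ∃ (σ : Equiv.Perm (Fin 5)) (ε : ℤˣ), ∃ y ∈ A4dual,
        (fun i => ((ε : ℤ) : ℚ) * a (σ i)) - b = (5 : ℚ) • y := by
  intro m hm a b ha hb hfa hfb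
  obtain ⟨M, hMeq, hMmem⟩ : ∃ M : ℤ, (M:ℚ) = m ∧ M ∈ ({2,4,6,8,10} : Finset ℤ) := by
    simp only [Set.mem_insert_iff, Set.mem_singleton_iff] at hm
    rcases hm with rfl|rfl|rfl|rfl|rfl
    exacts [⟨2, by norm_num, by decide⟩, ⟨4, by norm_num, by decide⟩,
      ⟨6, by norm_num, by decide⟩, ⟨8, by norm_num, by decide⟩, ⟨10, by norm_num, by decide⟩]
  choose na hna using ha.1
  choose nb hnb using hb.1
  have hsa : ∑ i, na i = 0 := by
    have h : ((∑ i, na i : ℤ) : ℚ) = ∑ i, a i := by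
      push_cast
      exact Finset.sum_congr rfl (fun i _ => (hna i).symm)
    exact_mod_cast h.trans ha.2
  have hsb : ∑ i, nb i = 0 := by
    have h : ((∑ i, nb i : ℤ) : ℚ) = ∑ i, b i := by
      push_cast
      exact Finset.sum_congr rfl (fun i _ => (hnb i).symm)
    exact_mod_cast h.trans hb.2
  have hqa : ∑ i, na i * na i = M := by
    have h : ((∑ i, na i * na i : ℤ) : ℚ) = form a a := by
      push_cast
      exact Finset.sum_congr rfl (fun i _ => by rw [hna i])
    exact_mod_cast h.trans (hfa.trans hMeq.symm)
  have hqb : ∑ i, nb i * nb i = M := by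
    have h : ((∑ i, nb i * nb i : ℤ) : ℚ) = form b b := by
      push_cast
      exact Finset.sum_congr rfl (fun i _ => by rw [hnb i])
    exact_mod_cast h.trans (hfb.trans hMeq.symm)
  obtain ⟨σa, εa, ca, hA⟩ := reduce_to_rep M hMmem na hsa hqa
  obtain ⟨σb, εb, cb, hB⟩ := reduce_to_rep M hMmem nb hsb hqb
  obtain ⟨s, hs1, hA⟩ : ∃ s : ℤ, (s = 1 ∨ s = -1) ∧
      ∀ i, (5:ℤ) ∣ s * na (σa i) - rep5 M i - ca := by
    cases εa
    · exact ⟨-1, Or.inr rfl, hA⟩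
    · exact ⟨1, Or.inl rfl, hA⟩
  obtain ⟨t, ht1, hB⟩ : ∃ t : ℤ, (t = 1 ∨ t = -1) ∧
      ∀ i, (5:ℤ) ∣ t * nb (σb i) - rep5 M i - cb := by
    cases εb
    · exact ⟨-1, Or.inr rfl, hB⟩
    · exact ⟨1, Or.inl rfl, hB⟩
  set σ : Equiv.Perm (Fin 5) := σb.symm.trans σa with hσ
  have hst : s * t = 1 ∨ s * t = -1 := by
    rcases hs1 with rfl|rfl <;> rcases ht1 with rfl|rfl <;> norm_num
  refine ⟨σ, if s * t = 1 then 1 else -1, ?_⟩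
  have hεval : (((if s * t = 1 then 1 else -1 : ℤˣ)) : ℤ) = s * t := by
    rcases hst with h|h <;> simp [h]
  set k : Fin 5 → ℤ := fun i => s * t * na (σ i) - nb i with hk
  have hmod : ∀ i, (5:ℤ) ∣ k i - t * (ca - cb) := by
    intro i
    have h1 := hA (σb.symm i)
    have h2 := hB (σb.symm i)
    rw [Equiv.apply_symm_apply] at h2
    have h3 : (5:ℤ) ∣ t * ((s * na (σa (σb.symm i)) - rep5 M (σb.symm i) - ca)
        - (t * nb i - rep5 M (σb.symm i) - cb)) := Dvd.dvd.mul_left (dvd_sub h1 h2) t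
    have hexp : t * ((s * na (σa (σb.symm i)) - rep5 M (σb.symm i) - ca)
        - (t * nb i - rep5 M (σb.symm i) - cb))
        = s * t * na (σa (σb.symm i)) - nb i - t * (ca - cb) := by
      rcases ht1 with rfl|rfl <;> ring
    rw [hexp] at h3
    exact h3
  have hkd : ∀ i, (5:ℤ) ∣ k i - k 0 := by
    intro i
    have h1 := hmod i
    have h2 := hmod 0
    omega
  have hksum : k 0 + k 1 + k 2 + k 3 + k 4 = 0 := by
    have h1 : ∑ i, na (σ i) = 0 := by
      have := Equiv.sum_comp σ na
      rw [hsa] at this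
      exact this
    have h2 : ∑ i, k i = 0 := by
      have h3 : ∑ i, k i = s * t * (∑ i, na (σ i)) - ∑ i, nb i := by
        rw [Finset.mul_sum, ← Finset.sum_sub_distrib]
      rw [h3, h1, hsb]
      ring
    rw [Fin.sum_univ_five] at h2
    exact h2
  refine ⟨fun i => (k i : ℚ)/5, mem_A4dual_of k hksum hkd, ?_⟩
  funext i
  simp only [Pi.sub_apply, Pi.smul_apply, smul_eq_mul]
  rw [hna (σ i), hnb i, hεval]
  have hki : ((k i : ℚ)) = (s : ℚ) * t * (na (σ i) : ℚ) - (nb i : ℚ) := by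
    show (((s * t * na (σ i) - nb i : ℤ) : ℚ)) = _
    push_cast
    ring
  push_cast
  rw [hki]
  ring
end
end
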